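/- arXiv:1308.3860 — 8 statements merged into one kernel-verified Lean document; each statement's English description precedes it below -/
import Mathlib

section
/- Let V = V^(1) ⊗ ⋯ ⊗ V^(d) be a tensor product of finite-dimensional complex Hilbert spaces and suppose a tensor T ∈ V has two diagonal singular value decompositions T = ∑_{i=1}^s λ_i w_i and T = ∑_{j=1}^r σ_j v_j, with λ_1 ≥ ⋯ ≥ λ_s > 0 and σ_1 ≥ ⋯ ≥ σ_r > 0. Then r = s and λ_i = σ_i for all i; i.e., the singular values of T are uniquely determined by T. -/
noncomputable section

open Finset

abbrev TensorSpace {d : ℕ} (ι : Fin d → Type*) [∀ e, Fintype (ι e)] : Type _ :=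
  EuclideanSpace ℂ (∀ e, ι e)

variable {d : ℕ} {ι : Fin d → Type*} [∀ e, Fintype (ι e)]

/-- A pure tensor: `v⁽¹⁾ ⊗ ⋯ ⊗ v⁽ᵈ⁾`. -/
def IsPure (T : TensorSpace ι) : Prop :=
  ∃ v : ∀ e, ι e → ℂ, ∀ i : ∀ e, ι e, T i = ∏ e, v e (i e)

/-- Nuclear norm of a tensor. -/
def nuclearNorm (T : TensorSpace ι) : ℝ :=
  sInf {c : ℝ | ∃ (r : ℕ) (v : Fin r → TensorSpace ι),
    (∀ i, IsPure (v i)) ∧ T = ∑ i, v i ∧ c = ∑ i, ‖v i‖}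

/-- `[S]_α`. -/
def bracket {κ : Type*} [Fintype κ] (S : κ → TensorSpace ι) (α : ℝ) : ℝ :=
  sSup {c : ℝ | ∃ u : TensorSpace ι, IsPure u ∧ ‖u‖ = 1 ∧
    c = (∑ i, ‖(inner ℂ (S i) u : ℂ)‖ ^ α) ^ (1 / α)}

/-- The spectral norm `[T]`. -/
def tensorSpectralNorm (T : TensorSpace ι) : ℝ :=
  sSup {c : ℝ | ∃ u : TensorSpace ι, IsPure u ∧ ‖u‖ = 1 ∧ c = ‖(inner ℂ T u : ℂ)‖}

/-- `t`-orthogonality of a tuple of unit tensors. -/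
def TOrthogonal {κ : Type*} [Fintype κ] (S : κ → TensorSpace ι) (t : ℝ) : Prop :=
  (∀ i, ‖S i‖ = 1) ∧ bracket S (2 / t) = 1

/-- Diagonal singular value decomposition. -/
def IsDSVD {r : ℕ} (T : TensorSpace ι) (σ : Fin r → ℝ) (v : Fin r → TensorSpace ι) : Prop :=
  (∀ i j : Fin r, i ≤ j → σ j ≤ σ i) ∧ (∀ i, 0 < σ i) ∧ (∀ i, IsPure (v i)) ∧
    TOrthogonal v 2 ∧ T = ∑ i, (σ i : ℂ) • v i

/-- `μ_α`. -/
def mu {κ : Type*} [Fintype κ] [DecidableEq κ] (v : κ → TensorSpace ι) (α : ℝ) : ℝ :=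
  sSup {c : ℝ | ∃ i, c = (∑ j ∈ univ.erase i, ‖(inner ℂ (v i) (v j) : ℂ)‖ ^ α) ^ (1 / α)}

lemma torth_sum_le {κ : Type*} [Fintype κ] {v : κ → TensorSpace ι}
    (hv : TOrthogonal v 2) {p : TensorSpace ι} (hp : IsPure p) (hnp : ‖p‖ = 1) :
    ∑ i, ‖(inner ℂ (v i) p : ℂ)‖ ≤ 1 := by
  obtain ⟨hnorm, hbr⟩ := hv
  have h22 : (2:ℝ)/2 = 1 := by norm_num
  rw [h22] at hbr
  unfold bracket at hbr
  have hmem : (∑ i, ‖(inner ℂ (v i) p : ℂ)‖) ∈ {c : ℝ | ∃ u : TensorSpace ι, IsPure u ∧ ‖u‖ = 1 ∧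
      c = (∑ i, ‖(inner ℂ (v i) u : ℂ)‖ ^ (1:ℝ)) ^ (1 / (1:ℝ))} :=
    ⟨p, hp, hnp, by simp⟩
  have hbdd : BddAbove {c : ℝ | ∃ u : TensorSpace ι, IsPure u ∧ ‖u‖ = 1 ∧
      c = (∑ i, ‖(inner ℂ (v i) u : ℂ)‖ ^ (1:ℝ)) ^ (1 / (1:ℝ))} := by
    refine ⟨(Fintype.card κ : ℝ), ?_⟩
    rintro c ⟨u, _, hu, rfl⟩
    simp only [Real.rpow_one, one_div_one]
    calc ∑ i, ‖(inner ℂ (v i) u : ℂ)‖ ≤ ∑ _i : κ, (1:ℝ) := by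
          refine Finset.sum_le_sum fun i _ => ?_
          calc ‖(inner ℂ (v i) u : ℂ)‖ ≤ ‖v i‖ * ‖u‖ := norm_inner_le_norm _ _
            _ = 1 := by rw [hnorm i, hu]; ring
      _ = Fintype.card κ := by simp
  have h := le_csSup hbdd hmem
  rwa [hbr] at h

lemma torth_inner_eq_zero {κ : Type*} [Fintype κ] [DecidableEq κ] {v : κ → TensorSpace ι}
    (hv : TOrthogonal v 2) (hpure : ∀ i, IsPure (v i)) {i j : κ} (hij : i ≠ j) :
    (inner ℂ (v i) (v j) : ℂ) = 0 := by
  have hs := torth_sum_le hv (hpure j) (hv.1 j)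
  have hjj : ‖(inner ℂ (v j) (v j) : ℂ)‖ = 1 := by
    rw [inner_self_eq_norm_sq_to_K]
    simp [hv.1 j]
  rw [← Finset.add_sum_erase _ _ (Finset.mem_univ j), hjj] at hs
  have hz : ∑ i ∈ univ.erase j, ‖(inner ℂ (v i) (v j) : ℂ)‖ ≤ 0 := by linarith
  have h0 : ∑ i ∈ univ.erase j, ‖(inner ℂ (v i) (v j) : ℂ)‖ = 0 :=
    le_antisymm hz (Finset.sum_nonneg fun _ _ => norm_nonneg _)
  have := (Finset.sum_eq_zero_iff_of_nonneg (fun _ _ => norm_nonneg _)).mp h0 i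
    (Finset.mem_erase.mpr ⟨hij, Finset.mem_univ i⟩)
  exact norm_eq_zero.mp this

lemma inner_dsvd {r : ℕ} {T : TensorSpace ι} {σ : Fin r → ℝ} {v : Fin r → TensorSpace ι}
    (hv : IsDSVD T σ v) (i : Fin r) : (inner ℂ T (v i) : ℂ) = (σ i : ℂ) := by
  obtain ⟨-, -, hpure, horth, hT⟩ := hv
  rw [hT, sum_inner]
  rw [Finset.sum_eq_single i]
  · rw [inner_smul_left, inner_self_eq_norm_sq_to_K, horth.1 i]
    simp [Complex.conj_ofReal]
  · intro j _ hji
    rw [inner_smul_left, torth_inner_eq_zero horth hpure hji, mul_zero]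
  · simp

/-- core inequality -/
lemma key_core {s r : ℕ} {T : TensorSpace ι} {lam : Fin s → ℝ} {w : Fin s → TensorSpace ι}
    {sig : Fin r → ℝ} {v : Fin r → TensorSpace ι}
    (hw : IsDSVD T lam w) (hv : IsDSVD T sig v) (I : Finset (Fin s)) :
    ∑ i ∈ I, lam i ≤ ∑ j, sig j * (∑ i ∈ I, ‖(inner ℂ (v j) (w i) : ℂ)‖) := by
  have hstep : ∀ i : Fin s, lam i ≤ ∑ j, sig j * ‖(inner ℂ (v j) (w i) : ℂ)‖ := by
    intro i
    have h1 : (lam i : ℂ) = inner ℂ T (w i) := (inner_dsvd hw i).symm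
    have h2 : lam i = ‖(inner ℂ T (w i) : ℂ)‖ := by
      rw [← h1]
      simp [Complex.norm_real, Real.norm_eq_abs, abs_of_pos (hw.2.1 i)]
    rw [h2, hv.2.2.2.2, sum_inner]
    calc ‖∑ j, (inner ℂ ((sig j : ℂ) • v j) (w i) : ℂ)‖
        ≤ ∑ j, ‖(inner ℂ ((sig j : ℂ) • v j) (w i) : ℂ)‖ := norm_sum_le _ _
      _ = ∑ j, sig j * ‖(inner ℂ (v j) (w i) : ℂ)‖ := by
          refine Finset.sum_congr rfl fun j _ => ?_
          rw [inner_smul_left, norm_mul, Complex.conj_ofReal]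
          simp [Complex.norm_real, Real.norm_eq_abs, abs_of_pos (hv.2.1 j)]
  calc ∑ i ∈ I, lam i ≤ ∑ i ∈ I, ∑ j, sig j * ‖(inner ℂ (v j) (w i) : ℂ)‖ :=
        Finset.sum_le_sum fun i _ => hstep i
    _ = ∑ j, sig j * (∑ i ∈ I, ‖(inner ℂ (v j) (w i) : ℂ)‖) := by
        rw [Finset.sum_comm]
        exact Finset.sum_congr rfl fun j _ => by rw [Finset.mul_sum]

lemma card_filter_lt (n k : ℕ) :
    ((univ : Finset (Fin n)).filter (fun i : Fin n => (i:ℕ) < k)).card = min k n := by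
  classical
  rw [← Fintype.card_subtype]
  have : Fintype.card {i : Fin n // (i:ℕ) < k} = Fintype.card (Fin (min k n)) :=
    Fintype.card_congr
      { toFun := fun x => ⟨(x.1 : ℕ), lt_min x.2 x.1.isLt⟩
        invFun := fun x => ⟨⟨(x : ℕ), lt_of_lt_of_le x.isLt (min_le_right _ _)⟩,
          lt_of_lt_of_le x.isLt (min_le_left _ _)⟩
        left_inv := fun x => by ext; rfl
        right_inv := fun x => rfl }
  rw [this, Fintype.card_fin]

lemma key_A {s r : ℕ} {T : TensorSpace ι} {lam : Fin s → ℝ} {w : Fin s → TensorSpace ι}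
    {sig : Fin r → ℝ} {v : Fin r → TensorSpace ι}
    (hw : IsDSVD T lam w) (hv : IsDSVD T sig v) (k : ℕ) (hkr : k ≤ r) :
    ∑ i ∈ univ.filter (fun i : Fin s => (i:ℕ) < k), lam i ≤
      ∑ j ∈ univ.filter (fun j : Fin r => (j:ℕ) < k), sig j := by
  classical
  rcases Nat.eq_zero_or_pos k with rfl | hk
  · simp
  set I : Finset (Fin s) := univ.filter (fun i : Fin s => (i:ℕ) < k) with hI
  set J : Finset (Fin r) := univ.filter (fun j : Fin r => (j:ℕ) < k) with hJ
  set c : Fin r → ℝ := fun j => ∑ i ∈ I, ‖(inner ℂ (v j) (w i) : ℂ)‖ with hc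
  have hc0 : ∀ j, 0 ≤ c j := fun j => Finset.sum_nonneg fun _ _ => norm_nonneg _
  have hc1 : ∀ j, c j ≤ 1 := by
    intro j
    have h := torth_sum_le hw.2.2.2.1 (hv.2.2.1 j) (hv.2.2.2.1.1 j)
    calc c j = ∑ i ∈ I, ‖(inner ℂ (w i) (v j) : ℂ)‖ :=
          Finset.sum_congr rfl fun i _ => norm_inner_symm _ _
      _ ≤ ∑ i, ‖(inner ℂ (w i) (v j) : ℂ)‖ :=
          Finset.sum_le_sum_of_subset_of_nonneg (Finset.subset_univ I)
            (fun _ _ _ => norm_nonneg _)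
      _ ≤ 1 := h
  have hcsum : ∑ j, c j ≤ (I.card : ℝ) := by
    rw [hc]
    rw [Finset.sum_comm]
    calc ∑ i ∈ I, ∑ j, ‖(inner ℂ (v j) (w i) : ℂ)‖ ≤ ∑ _i ∈ I, (1:ℝ) :=
          Finset.sum_le_sum fun i hi =>
            torth_sum_le hv.2.2.2.1 (hw.2.2.1 i) (hw.2.2.2.1.1 i)
      _ = I.card := by simp
  have hIcard : (I.card : ℝ) ≤ (k : ℝ) := by
    have : I.card = min k s := card_filter_lt s k
    rw [this]
    exact_mod_cast min_le_left k s
  have hJcard : J.card = k := by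
    have : J.card = min k r := card_filter_lt r k
    omega
  set m : ℝ := sig ⟨k-1, by omega⟩ with hm
  have hm0 : 0 ≤ m := le_of_lt (hv.2.1 _)
  have hmJ : ∀ j ∈ J, m ≤ sig j := by
    intro j hj
    have hjk : (j:ℕ) < k := by
      have := Finset.mem_filter.mp hj
      exact this.2
    exact hv.1 j ⟨k-1, by omega⟩ (by simp [Fin.le_def]; omega)
  have hmJc : ∀ j ∈ univ.filter (fun j : Fin r => ¬ (j:ℕ) < k), sig j ≤ m := by
    intro j hj
    have hjk : ¬ (j:ℕ) < k := (Finset.mem_filter.mp hj).2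
    exact hv.1 ⟨k-1, by omega⟩ j (by simp [Fin.le_def]; omega)
  have hsplitσc := Finset.sum_filter_add_sum_filter_not univ
    (fun j : Fin r => (j:ℕ) < k) (fun j => sig j * c j)
  have hsplitc := Finset.sum_filter_add_sum_filter_not univ
    (fun j : Fin r => (j:ℕ) < k) c
  have hnotle : ∑ j ∈ univ.filter (fun j : Fin r => ¬ (j:ℕ) < k), sig j * c j ≤
      m * ((k : ℝ) - ∑ j ∈ J, c j) := by
    have h1 : ∑ j ∈ univ.filter (fun j : Fin r => ¬ (j:ℕ) < k), sig j * c j ≤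
        ∑ j ∈ univ.filter (fun j : Fin r => ¬ (j:ℕ) < k), m * c j :=
      Finset.sum_le_sum fun j hj => mul_le_mul_of_nonneg_right (hmJc j hj) (hc0 j)
    have h2 : ∑ j ∈ univ.filter (fun j : Fin r => ¬ (j:ℕ) < k), m * c j =
        m * ∑ j ∈ univ.filter (fun j : Fin r => ¬ (j:ℕ) < k), c j := by
      rw [Finset.mul_sum]
    have h3 : ∑ j ∈ univ.filter (fun j : Fin r => ¬ (j:ℕ) < k), c j ≤
        (k : ℝ) - ∑ j ∈ J, c j := by
      have h4 : ∑ j, c j ≤ (k : ℝ) := hcsum.trans hIcard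
      have h5 : ∑ j ∈ J, c j + ∑ j ∈ univ.filter (fun j : Fin r => ¬ (j:ℕ) < k), c j
          = ∑ j, c j := hsplitc
      linarith
    calc ∑ j ∈ univ.filter (fun j : Fin r => ¬ (j:ℕ) < k), sig j * c j
        ≤ m * ∑ j ∈ univ.filter (fun j : Fin r => ¬ (j:ℕ) < k), c j := by rw [← h2]; exact h1
      _ ≤ m * ((k : ℝ) - ∑ j ∈ J, c j) := mul_le_mul_of_nonneg_left h3 hm0
  have hfin : ∑ j ∈ J, sig j * c j + m * ((k : ℝ) - ∑ j ∈ J, c j) ≤ ∑ j ∈ J, sig j := by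
    have heq : ∑ j ∈ J, m * (1 - c j) = m * ((k : ℝ) - ∑ j ∈ J, c j) := by
      have e1 : ∑ j ∈ J, m * (1 - c j) = ∑ j ∈ J, (m - m * c j) := by
        refine Finset.sum_congr rfl fun j _ => by ring
      rw [e1, Finset.sum_sub_distrib, Finset.sum_const, ← Finset.mul_sum, hJcard,
        nsmul_eq_mul]
      ring
    rw [← heq, ← Finset.sum_add_distrib]
    refine Finset.sum_le_sum fun j hj => ?_
    have h6 := hmJ j hj
    have h7 := hc1 j
    have h8 := hc0 j
    nlinarith
  calc ∑ i ∈ I, lam i ≤ ∑ j, sig j * c j := key_core hw hv I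
    _ = ∑ j ∈ J, sig j * c j +
        ∑ j ∈ univ.filter (fun j : Fin r => ¬ (j:ℕ) < k), sig j * c j := hsplitσc.symm
    _ ≤ ∑ j ∈ J, sig j * c j + m * ((k : ℝ) - ∑ j ∈ J, c j) := by linarith
    _ ≤ ∑ j ∈ J, sig j := hfin

lemma key_B {s r : ℕ} {T : TensorSpace ι} {lam : Fin s → ℝ} {w : Fin s → TensorSpace ι}
    {sig : Fin r → ℝ} {v : Fin r → TensorSpace ι}
    (hw : IsDSVD T lam w) (hv : IsDSVD T sig v) (I : Finset (Fin s)) :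
    ∑ i ∈ I, lam i ≤ ∑ j, sig j := by
  refine (key_core hw hv I).trans (Finset.sum_le_sum fun j _ => ?_)
  have hc1 : ∑ i ∈ I, ‖(inner ℂ (v j) (w i) : ℂ)‖ ≤ 1 := by
    have := torth_sum_le hw.2.2.2.1 (hv.2.2.1 j) (hv.2.2.2.1.1 j)
    calc ∑ i ∈ I, ‖(inner ℂ (v j) (w i) : ℂ)‖
        = ∑ i ∈ I, ‖(inner ℂ (w i) (v j) : ℂ)‖ :=
          Finset.sum_congr rfl fun i _ => norm_inner_symm _ _
      _ ≤ ∑ i, ‖(inner ℂ (w i) (v j) : ℂ)‖ :=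
          Finset.sum_le_sum_of_subset_of_nonneg (Finset.subset_univ I)
            (fun _ _ _ => norm_nonneg _)
      _ ≤ 1 := this
  nlinarith [le_of_lt (hv.2.1 j), Finset.sum_nonneg (fun i (_ : i ∈ I) => norm_nonneg (inner ℂ (v j) (w i) : ℂ))]

lemma filter_succ {n : ℕ} (k : ℕ) (hk : k < n) :
    ((univ : Finset (Fin n)).filter fun i : Fin n => (i:ℕ) < k+1) =
      insert ⟨k, hk⟩ ((univ : Finset (Fin n)).filter fun i : Fin n => (i:ℕ) < k) := by
  ext i
  simp [Fin.ext_iff]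
  omega


/-- **Theorem 1.4 (Uniqueness of singular values).** If a tensor `T` has two diagonal
singular value decompositions `T = ∑ᵢ λᵢ wᵢ` and `T = ∑ⱼ σⱼ vⱼ`, then `r = s` and
`λᵢ = σᵢ` for all `i`. -/
theorem dsvd_singular_values_unique {d s r : ℕ} {ι : Fin d → Type*} [∀ e, Fintype (ι e)]
    (T : TensorSpace ι) (lam : Fin s → ℝ) (w : Fin s → TensorSpace ι)
    (sig : Fin r → ℝ) (v : Fin r → TensorSpace ι)
    (hw : IsDSVD T lam w) (hv : IsDSVD T sig v) :
    s = r ∧ ∀ (i : Fin s) (j : Fin r), (i : ℕ) = (j : ℕ) → lam i = sig j := by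
  classical
  have main : ∀ (s' r' : ℕ) (lam' : Fin s' → ℝ) (w' : Fin s' → TensorSpace ι)
      (sig' : Fin r' → ℝ) (v' : Fin r' → TensorSpace ι),
      IsDSVD T lam' w' → IsDSVD T sig' v' → s' < r' → False := by
    intro s' r' lam' w' sig' v' hw' hv' hlt
    -- full sigma sum ≤ full lam sum (key_B)
    have h1 : ∑ j, sig' j ≤ ∑ i, lam' i := key_B hv' hw' univ
    -- full lam sum ≤ partial sigma sum up to s'
    have h2 : ∑ i, lam' i ≤ ∑ j ∈ univ.filter (fun j : Fin r' => (j:ℕ) < s'), sig' j := by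
      have := key_A hw' hv' s' (le_of_lt hlt)
      have hfull : (univ : Finset (Fin s')).filter (fun i : Fin s' => (i:ℕ) < s') = univ := by
        ext i; simp [i.isLt]
      rwa [hfull] at this
    have h3 : ∑ j ∈ univ.filter (fun j : Fin r' => (j:ℕ) < s'), sig' j < ∑ j, sig' j := by
      have hsplit := Finset.sum_filter_add_sum_filter_not univ
        (fun j : Fin r' => (j:ℕ) < s') sig'
      have hpos : 0 < ∑ j ∈ univ.filter (fun j : Fin r' => ¬ (j:ℕ) < s'), sig' j := by
        refine Finset.sum_pos (fun j _ => hv'.2.1 j) ?_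
        exact ⟨⟨s', hlt⟩, by simp⟩
      linarith
    linarith
  have hsr : s = r := by
    rcases lt_trichotomy s r with h | h | h
    · exact absurd (main s r lam w sig v hw hv h) (fun x => x)
    · exact h
    · exact absurd (main r s sig v lam w hv hw h) (fun x => x)
  subst hsr
  refine ⟨rfl, ?_⟩
  -- partial sums are equal
  have hP : ∀ k : ℕ, k ≤ s →
      ∑ i ∈ univ.filter (fun i : Fin s => (i:ℕ) < k), lam i =
      ∑ j ∈ univ.filter (fun j : Fin s => (j:ℕ) < k), sig j := by
    intro k hk
    exact le_antisymm (key_A hw hv k hk) (key_A hv hw k hk)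
  intro i j hij
  have hji : i = j := by
    apply Fin.ext; omega
  subst hji
  have h1 := hP i (le_of_lt i.isLt)
  have h2 := hP ((i:ℕ)+1) i.isLt
  rw [filter_succ (i:ℕ) i.isLt] at h2
  rw [Finset.sum_insert (by simp), Finset.sum_insert (by simp)] at h2
  have he : (⟨(i:ℕ), i.isLt⟩ : Fin s) = i := Fin.eta i i.isLt
  rw [he] at h2
  linarith
end
end

section
/- Let V = V^(1) ⊗ ⋯ ⊗ V^(d) be a tensor product of finite-dimensional complex Hilbert spaces and suppose T ∈ V has a diagonal singular value decomposition whose singular values σ_1 > σ_2 > ⋯ > σ_r > 0 are pairwise distinct. Then the diagonal singular value decomposition of T is unique: if T = ∑_{i=1}^r σ_i v_i and T = ∑_{i=1}^r σ_i w_i are two DSVDs, then v_i = w_i for all i. -/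
noncomputable section

open Finset

variable {d : ℕ} {ι : Fin d → Type*} [∀ e, Fintype (ι e)]

/-- Key bound from 2-orthogonality: for any pure unit tensor `u`,
`∑ i, ‖⟨S i, u⟩‖ ≤ 1`. -/
lemma key_bound {κ : Type*} [Fintype κ] (S : κ → TensorSpace ι)
    (hS : TOrthogonal S 2) (u : TensorSpace ι) (hu : IsPure u) (hn : ‖u‖ = 1) :
    ∑ i, ‖(inner ℂ (S i) u : ℂ)‖ ≤ 1 := by
  obtain ⟨-, hb⟩ := hS
  unfold bracket at hb
  set A := {c : ℝ | ∃ u : TensorSpace ι, IsPure u ∧ ‖u‖ = 1 ∧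
    c = (∑ i, ‖(inner ℂ (S i) u : ℂ)‖ ^ ((2:ℝ)/2)) ^ (1 / ((2:ℝ)/2))} with hA
  have h22 : (2:ℝ)/2 = 1 := by norm_num
  have hmem : (∑ i, ‖(inner ℂ (S i) u : ℂ)‖) ∈ A := by
    refine ⟨u, hu, hn, ?_⟩
    rw [h22]
    simp [Real.rpow_one]
  have hbdd : BddAbove A := by
    by_contra h
    rw [Real.sSup_of_not_bddAbove h] at hb
    norm_num at hb
  have := le_csSup hbdd hmem
  rwa [hb] at this

/-- 2-orthogonal tuples of unit pure tensors are orthonormal. -/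
lemma ortho_of_tOrthogonal {κ : Type*} [Fintype κ] [DecidableEq κ] (S : κ → TensorSpace ι)
    (hpure : ∀ i, IsPure (S i)) (hS : TOrthogonal S 2) {i j : κ} (hij : i ≠ j) :
    (inner ℂ (S i) (S j) : ℂ) = 0 := by
  have hn := hS.1
  have hb := key_bound S hS (S j) (hpure j) (hn j)
  have hjj : ‖(inner ℂ (S j) (S j) : ℂ)‖ = 1 := by
    rw [inner_self_eq_norm_sq_to_K]
    simp [hn j]
  have hrest : ∑ k ∈ univ.erase j, ‖(inner ℂ (S k) (S j) : ℂ)‖ ≤ 0 := by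
    have h := Finset.sum_erase_add univ (fun k => ‖(inner ℂ (S k) (S j) : ℂ)‖) (mem_univ j)
    linarith
  have hz : ∀ k ∈ univ.erase j, ‖(inner ℂ (S k) (S j) : ℂ)‖ = 0 := by
    intro k hk
    have h0 : 0 ≤ ∑ k ∈ univ.erase j, ‖(inner ℂ (S k) (S j) : ℂ)‖ :=
      Finset.sum_nonneg fun k _ => norm_nonneg _
    have := (Finset.sum_eq_zero_iff_of_nonneg (fun k _ => norm_nonneg _)).1
      (le_antisymm hrest h0)
    exact this k hk
  have := hz i (Finset.mem_erase.2 ⟨hij, mem_univ i⟩)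
  exact norm_eq_zero.1 this

/-- **Theorem 1.6.** If the singular values of `T` are (pairwise) distinct, then the diagonal
singular value decomposition of `T` is unique. -/
theorem dsvd_unique_of_distinct_singular_values {d r : ℕ} {ι : Fin d → Type*}
    [∀ e, Fintype (ι e)] (T : TensorSpace ι) (σ : Fin r → ℝ)
    (v w : Fin r → TensorSpace ι)
    (hdistinct : ∀ i j : Fin r, i < j → σ j < σ i)
    (hv : IsDSVD T σ v) (hw : IsDSVD T σ w) :
    ∀ i, v i = w i := by
  obtain ⟨hmono, hpos, hpure_v, horth_v, hTv⟩ := hv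
  obtain ⟨-, -, hpure_w, horth_w, hTw⟩ := hw
  set A : Fin r → Fin r → ℂ := fun i k => (inner ℂ (v i) (w k) : ℂ) with hA
  -- column bound
  have hcol : ∀ k, ∑ i, ‖A i k‖ ≤ 1 := fun k =>
    key_bound v horth_v (w k) (hpure_w k) (horth_w.1 k)
  -- row bound
  have hrow : ∀ i, ∑ k, ‖A i k‖ ≤ 1 := by
    intro i
    have := key_bound w horth_w (v i) (hpure_v i) (horth_v.1 i)
    calc ∑ k, ‖A i k‖ = ∑ k, ‖(inner ℂ (w k) (v i) : ℂ)‖ := by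
          refine Finset.sum_congr rfl fun k _ => ?_
          exact norm_inner_symm _ _
      _ ≤ 1 := this
  -- the equation σ k = ∑ i σ i * A i k
  have heq : ∀ k, (σ k : ℂ) = ∑ i, (σ i : ℂ) * A i k := by
    intro k
    have h1 : (inner ℂ T (w k) : ℂ) = ∑ i, (σ i : ℂ) * A i k := by
      rw [hTv, sum_inner]
      refine Finset.sum_congr rfl fun i _ => ?_
      rw [inner_smul_left, Complex.conj_ofReal]
    have h2 : (inner ℂ T (w k) : ℂ) = (σ k : ℂ) := by
      rw [hTw, sum_inner]
      rw [Finset.sum_eq_single k]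
      · rw [inner_smul_left, Complex.conj_ofReal, inner_self_eq_norm_sq_to_K, horth_w.1 k]
        norm_num
      · intro i _ hik
        rw [inner_smul_left, ortho_of_tOrthogonal w hpure_w horth_w hik, mul_zero]
      · intro h; exact absurd (mem_univ k) h
    rw [← h1, h2]
  -- main induction: A is the identity
  have main : ∀ n : ℕ, ∀ k : Fin r, (k : ℕ) = n →
      (A k k = 1 ∧ ∀ j : Fin r, j ≠ k → A k j = 0) := by
    intro n
    induction n using Nat.strong_induction_on with
    | _ n ih =>
      intro k hk
      have hlt : ∀ i : Fin r, i < k → A i k = 0 := by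
        intro i hi
        have hin : (i : ℕ) < n := hk ▸ hi
        exact (ih i hin i rfl).2 k (ne_of_gt hi)
      -- inequality chain
      have h1 : σ k ≤ ∑ i, σ i * ‖A i k‖ := by
        have : (σ k : ℝ) = ‖((σ k : ℂ))‖ := by
          rw [Complex.norm_real, Real.norm_eq_abs, abs_of_pos (hpos k)]
        rw [this, heq k]
        calc ‖∑ i, (σ i : ℂ) * A i k‖ ≤ ∑ i, ‖(σ i : ℂ) * A i k‖ := norm_sum_le _ _
          _ = ∑ i, σ i * ‖A i k‖ := by
              refine Finset.sum_congr rfl fun i _ => ?_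
              rw [norm_mul, Complex.norm_real, Real.norm_eq_abs, abs_of_pos (hpos i)]
      have h2 : ∑ i, σ i * ‖A i k‖ ≤ σ k * ∑ i, ‖A i k‖ := by
        rw [Finset.mul_sum]
        refine Finset.sum_le_sum fun i _ => ?_
        rcases lt_trichotomy i k with h | h | h
        · rw [hlt i h]; simp
        · rw [h]
        · exact mul_le_mul_of_nonneg_right (hmono k i h.le) (norm_nonneg _)
      have h3 : σ k * ∑ i, ‖A i k‖ ≤ σ k := by
        have := hcol k
        nlinarith [hpos k]
      -- equalities
      have e2 : ∑ i, σ i * ‖A i k‖ = σ k * ∑ i, ‖A i k‖ := le_antisymm h2 (by linarith)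
      -- zero off-diagonal in column k below
      have hzero : ∀ i : Fin r, i ≠ k → A i k = 0 := by
        intro i hik
        rcases lt_or_gt_of_ne hik with h | h
        · exact hlt i h
        · have hsum0 : ∑ i, (σ k - σ i) * ‖A i k‖ = 0 := by
            have : ∑ i, (σ k - σ i) * ‖A i k‖
                = σ k * ∑ i, ‖A i k‖ - ∑ i, σ i * ‖A i k‖ := by
              rw [Finset.mul_sum, ← Finset.sum_sub_distrib]
              refine Finset.sum_congr rfl fun i _ => by ring
            rw [this, e2]; ring
          have hterm : ∀ i ∈ univ, 0 ≤ (σ k - σ i) * ‖A i k‖ := by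
            intro i _
            rcases lt_trichotomy i k with h' | h' | h'
            · rw [hlt i h']; simp
            · rw [h']; simp
            · have : σ i < σ k := hdistinct k i h'
              exact mul_nonneg (by linarith) (norm_nonneg _)
          have := (Finset.sum_eq_zero_iff_of_nonneg hterm).1 hsum0 i (mem_univ i)
          have hσ : σ i < σ k := hdistinct k i h
          have : ‖A i k‖ = 0 := by
            rcases mul_eq_zero.1 this with h0 | h0
            · exfalso; linarith [h0]
            · exact h0
          exact norm_eq_zero.1 this
      -- diagonal is 1
      have hdiag : A k k = 1 := by
        have := heq k
        rw [Finset.sum_eq_single k] at this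
        · have hσne : (σ k : ℂ) ≠ 0 := by
            exact_mod_cast ne_of_gt (hpos k)
          exact mul_left_cancel₀ hσne (by rw [mul_one]; exact this.symm)
        · intro i _ hik
          rw [hzero i hik, mul_zero]
        · intro h; exact absurd (mem_univ k) h
      refine ⟨hdiag, ?_⟩
      -- row zeros from row bound
      intro j hjk
      have hb := hrow k
      have hkk : ‖A k k‖ = 1 := by rw [hdiag]; norm_num
      have hrest : ∑ l ∈ univ.erase k, ‖A k l‖ ≤ 0 := by
        have h := Finset.sum_erase_add univ (fun l => ‖A k l‖) (mem_univ k)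
        linarith
      have h0 : 0 ≤ ∑ l ∈ univ.erase k, ‖A k l‖ :=
        Finset.sum_nonneg fun l _ => norm_nonneg _
      have := (Finset.sum_eq_zero_iff_of_nonneg (fun l _ => norm_nonneg _)).1
        (le_antisymm hrest h0) j (Finset.mem_erase.2 ⟨hjk, mem_univ j⟩)
      exact norm_eq_zero.1 this
  -- conclude
  intro k
  have hAkk : A k k = 1 := (main k k rfl).1
  have hre : RCLike.re (inner ℂ (v k) (w k) : ℂ) = 1 := by
    rw [show (inner ℂ (v k) (w k) : ℂ) = A k k from rfl, hAkk]; simp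
  have hnorm : ‖v k - w k‖ ^ 2 = 0 := by
    rw [@norm_sub_sq ℂ _ _ _ _ (v k) (w k), horth_v.1 k, horth_w.1 k, hre]
    norm_num
  have := pow_eq_zero_iff (n := 2) (by norm_num) |>.1 hnorm
  exact sub_eq_zero.1 (norm_eq_zero.1 this)
end
end

section
/- Let V = V^(1) ⊗ ⋯ ⊗ V^(d) be a tensor product of finite-dimensional complex Hilbert spaces and suppose T = ∑_{i=1}^r σ_i v_i is a diagonal singular value decomposition of T such that the tuple (v_1,…,v_r) is t-orthogonal for some t > 2. Then the diagonal singular value decomposition of T is unique up to reordering: for any other DSVD T = ∑_{i=1}^r σ_i w_i, the list (σ_1 w_1,…,σ_r w_r) is a permutation of (σ_1 v_1,…,σ_r v_r). -/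
noncomputable section

open Finset

variable {d : ℕ} {ι : Fin d → Type*} [∀ e, Fintype (ι e)]

/-- If `bracket S α = 1` then every pure unit tensor `u` witnesses the bound. -/
lemma bracket_bound {κ : Type*} [Fintype κ] (S : κ → TensorSpace ι) {α : ℝ} (hα : 0 < α)
    (hb : bracket S α = 1) {u : TensorSpace ι} (hu : IsPure u) (hnu : ‖u‖ = 1) :
    ∑ i, ‖(inner ℂ (S i) u : ℂ)‖ ^ α ≤ 1 := by
  have hb' : sSup {c : ℝ | ∃ u : TensorSpace ι, IsPure u ∧ ‖u‖ = 1 ∧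
      c = (∑ i, ‖(inner ℂ (S i) u : ℂ)‖ ^ α) ^ (1 / α)} = 1 := hb
  set A := {c : ℝ | ∃ u : TensorSpace ι, IsPure u ∧ ‖u‖ = 1 ∧
      c = (∑ i, ‖(inner ℂ (S i) u : ℂ)‖ ^ α) ^ (1 / α)} with hA
  have hmem : (∑ i, ‖(inner ℂ (S i) u : ℂ)‖ ^ α) ^ (1 / α) ∈ A := ⟨u, hu, hnu, rfl⟩
  have hbdd : BddAbove A := by
    by_contra h
    rw [Real.sSup_of_not_bddAbove h] at hb'
    norm_num at hb'
  have hle : (∑ i, ‖(inner ℂ (S i) u : ℂ)‖ ^ α) ^ (1 / α) ≤ 1 := by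
    have h := le_csSup hbdd hmem
    rwa [hb'] at h
  by_contra hgt
  push_neg at hgt
  have h1 : (1:ℝ) < (∑ i, ‖(inner ℂ (S i) u : ℂ)‖ ^ α) ^ (1 / α) :=
    (Real.one_lt_rpow_iff_of_pos (lt_trans one_pos hgt)).2 (Or.inl ⟨hgt, by positivity⟩)
  linarith

/-- A double sum of nonnegative reals being zero forces every term to vanish. -/
lemma double_sum_eq_zero {n m : ℕ} {f : Fin n → Fin m → ℝ} (h0 : ∀ j i, 0 ≤ f j i)
    (h : ∑ j, ∑ i, f j i = 0) (j : Fin n) (i : Fin m) : f j i = 0 := by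
  have h1 : ∀ j ∈ Finset.univ, ∑ i, f j i = 0 :=
    (Finset.sum_eq_zero_iff_of_nonneg
      (fun j _ => Finset.sum_nonneg fun i _ => h0 j i)).mp h
  exact (Finset.sum_eq_zero_iff_of_nonneg (fun i _ => h0 j i)).mp
    (h1 j (Finset.mem_univ j)) i (Finset.mem_univ i)

set_option maxHeartbeats 2000000 in
/-- **Theorem 1.7.** If `T = ∑ᵢ σᵢ vᵢ` is a diagonal singular value decomposition and
`(v₁, …, v_r)` is `t`-orthogonal for some `t > 2`, then the diagonal singular value
decomposition of `T` is unique: any other DSVD `T = ∑ᵢ σᵢ wᵢ` is a permutation of it. -/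
theorem dsvd_unique_of_tOrthogonal {d r : ℕ} {ι : Fin d → Type*} [∀ e, Fintype (ι e)]
    (T : TensorSpace ι) (σ : Fin r → ℝ) (v w : Fin r → TensorSpace ι)
    (t : ℝ) (ht : 2 < t)
    (hv : IsDSVD T σ v) (hvt : TOrthogonal v t)
    (hw : IsDSVD T σ w) :
    ∃ π : Equiv.Perm (Fin r), ∀ i, (σ i : ℂ) • w i = (σ (π i) : ℂ) • v (π i) := by
  classical
  obtain ⟨-, hσpos, hvpure, ⟨hvunit, -⟩, hTv⟩ := hv
  obtain ⟨-, -, hwpure, ⟨hwunit, hw2⟩, hTw⟩ := hw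
  have ht0 : (0:ℝ) < t := by linarith
  set s : ℝ := 2 / t with hs_def
  have hs_pos : 0 < s := by positivity
  have hs_lt : s < 1 := by rw [hs_def, div_lt_one ht0]; linarith
  have h22 : (2:ℝ)/2 = 1 := by norm_num
  rw [h22] at hw2
  -- The two bracket bounds, specialized to arbitrary pure unit tensors.
  have hvbound : ∀ u : TensorSpace ι, IsPure u → ‖u‖ = 1 →
      ∑ i, ‖(inner ℂ (v i) u : ℂ)‖ ^ s ≤ 1 :=
    fun u hu hnu => bracket_bound v hs_pos hvt.2 hu hnu
  have hwbound : ∀ u : TensorSpace ι, IsPure u → ‖u‖ = 1 →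
      ∑ i, ‖(inner ℂ (w i) u : ℂ)‖ ≤ 1 := by
    intro u hu hnu
    have h := bracket_bound w one_pos hw2 hu hnu
    simpa [Real.rpow_one] using h
  -- w is orthonormal
  have hwinner : ∀ j, (inner ℂ (w j) (w j) : ℂ) = 1 := by
    intro j
    rw [inner_self_eq_norm_sq_to_K, hwunit j]
    norm_num
  have hworth : ∀ i j, i ≠ j → (inner ℂ (w i) (w j) : ℂ) = 0 := by
    intro i j hij
    have hb := hwbound (w j) (hwpure j) (hwunit j)
    have hsplit : ∑ k ∈ univ.erase j, ‖(inner ℂ (w k) (w j) : ℂ)‖ =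
        (∑ k, ‖(inner ℂ (w k) (w j) : ℂ)‖) - ‖(inner ℂ (w j) (w j) : ℂ)‖ :=
      Finset.sum_erase_eq_sub (Finset.mem_univ j)
    have hterm : ‖(inner ℂ (w j) (w j) : ℂ)‖ = 1 := by rw [hwinner j]; norm_num
    have hrest : ∑ k ∈ univ.erase j, ‖(inner ℂ (w k) (w j) : ℂ)‖ ≤ 0 := by
      rw [hsplit, hterm]
      linarith
    have hz : ∀ k ∈ univ.erase j, ‖(inner ℂ (w k) (w j) : ℂ)‖ = 0 :=
      (Finset.sum_eq_zero_iff_of_nonneg (fun k _ => norm_nonneg _)).mp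
        (le_antisymm hrest (Finset.sum_nonneg fun k _ => norm_nonneg _))
    exact norm_eq_zero.mp (hz i (Finset.mem_erase.mpr ⟨hij, Finset.mem_univ i⟩))
  -- the transition coefficients
  obtain ⟨c, hc_def⟩ : ∃ c : Fin r → Fin r → ℂ, ∀ i j, c i j = (inner ℂ (v i) (w j) : ℂ) :=
    ⟨fun i j => (inner ℂ (v i) (w j) : ℂ), fun _ _ => rfl⟩
  obtain ⟨a, ha_def⟩ : ∃ a : Fin r → Fin r → ℝ, ∀ i j, a i j = ‖c i j‖ :=
    ⟨fun i j => ‖c i j‖, fun _ _ => rfl⟩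
  have ha_eq : ∀ i j, a i j = ‖(inner ℂ (v i) (w j) : ℂ)‖ := by
    intro i j; rw [ha_def, hc_def]
  have ha_nonneg : ∀ i j, 0 ≤ a i j := fun i j => (ha_def i j) ▸ norm_nonneg _
  have ha_le_one : ∀ i j, a i j ≤ 1 := by
    intro i j
    calc a i j ≤ ‖v i‖ * ‖w j‖ := by rw [ha_eq]; exact norm_inner_le_norm _ _
    _ = 1 := by rw [hvunit i, hwunit j]; norm_num
  have hre_le : ∀ i j, (c i j).re ≤ a i j := by
    intro i j
    calc (c i j).re ≤ |(c i j).re| := le_abs_self _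
    _ ≤ ‖c i j‖ := by exact Complex.abs_re_le_norm _
    _ = a i j := (ha_def i j).symm
  -- σ j = ∑ i σ i * c i j
  have hF1 : ∀ j, (σ j : ℂ) = ∑ i, (σ i : ℂ) * c i j := by
    intro j
    have h1 : (inner ℂ T (w j) : ℂ) = ∑ i, (σ i : ℂ) * c i j := by
      rw [hTv, sum_inner]
      refine Finset.sum_congr rfl fun i _ => ?_
      rw [inner_smul_left, ← hc_def]
      simp
    have h2 : (inner ℂ T (w j) : ℂ) = (σ j : ℂ) := by
      rw [hTw, sum_inner, Finset.sum_eq_single j]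
      · rw [inner_smul_left, hwinner j]; simp
      · intro b _ hbj; rw [inner_smul_left, hworth b j hbj]; simp
      · intro h; exact absurd (Finset.mem_univ j) h
    rw [← h1, h2]
  have hF1re : ∀ j, σ j = ∑ i, σ i * (c i j).re := by
    intro j
    have h := congrArg Complex.re (hF1 j)
    rw [Complex.re_sum] at h
    simpa using h
  -- a pointwise rpow inequality
  have hpw : ∀ x : ℝ, 0 ≤ x → x ≤ 1 → x ≤ x ^ s := by
    intro x hx0 hx1
    rcases eq_or_lt_of_le hx0 with h0 | h0
    · rw [← h0, Real.zero_rpow (ne_of_gt hs_pos)]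
    · calc x = x ^ (1:ℝ) := (Real.rpow_one _).symm
      _ ≤ x ^ s := Real.rpow_le_rpow_of_exponent_ge h0 hx1 hs_lt.le
  -- column and row bounds
  have hcol_s : ∀ j, ∑ i, a i j ^ s ≤ 1 := by
    intro j
    have h := hvbound (w j) (hwpure j) (hwunit j)
    calc ∑ i, a i j ^ s = ∑ i, ‖(inner ℂ (v i) (w j) : ℂ)‖ ^ s :=
        Finset.sum_congr rfl fun i _ => by rw [ha_eq]
    _ ≤ 1 := h
  have hcol1 : ∀ j, ∑ i, a i j ≤ 1 := by
    intro j
    exact le_trans (Finset.sum_le_sum fun i _ => hpw _ (ha_nonneg i j) (ha_le_one i j))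
      (hcol_s j)
  have hrow1 : ∀ i, ∑ j, a i j ≤ 1 := by
    intro i
    have h := hwbound (v i) (hvpure i) (hvunit i)
    calc ∑ j, a i j = ∑ j, ‖(inner ℂ (w j) (v i) : ℂ)‖ :=
        Finset.sum_congr rfl fun j _ => by rw [ha_eq]; exact norm_inner_symm _ _
    _ ≤ 1 := h
  -- the double-counting chain
  obtain ⟨S, hS_def⟩ : ∃ S : ℝ, S = ∑ j, σ j * σ j := ⟨_, rfl⟩
  obtain ⟨B, hB_def⟩ : ∃ B : ℝ, B = ∑ j, ∑ i, σ i * σ j * a i j := ⟨_, rfl⟩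
  obtain ⟨C, hC_def⟩ : ∃ C : ℝ, C = ∑ j, ∑ i, ((σ i * σ i + σ j * σ j)/2) * a i j := ⟨_, rfl⟩
  obtain ⟨X, hX_def⟩ : ∃ X : ℝ, X = ∑ i, σ i * σ i * (∑ j, a i j) := ⟨_, rfl⟩
  obtain ⟨Y, hY_def⟩ : ∃ Y : ℝ, Y = ∑ j, σ j * σ j * (∑ i, a i j) := ⟨_, rfl⟩
  have hSB : S = ∑ j, ∑ i, σ j * (σ i * (c i j).re) := by
    rw [hS_def]
    refine Finset.sum_congr rfl fun j _ => ?_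
    calc σ j * σ j = σ j * ∑ i, σ i * (c i j).re := by rw [← hF1re j]
    _ = ∑ i, σ j * (σ i * (c i j).re) := Finset.mul_sum _ _ _
  have hS_le_B : S ≤ B := by
    rw [hSB, hB_def]
    refine Finset.sum_le_sum fun j _ => Finset.sum_le_sum fun i _ => ?_
    have h1 := mul_le_mul_of_nonneg_left (hre_le i j)
      (mul_nonneg (hσpos i).le (hσpos j).le)
    nlinarith [h1]
  have hB_le_C : B ≤ C := by
    rw [hB_def, hC_def]
    refine Finset.sum_le_sum fun j _ => Finset.sum_le_sum fun i _ => ?_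
    nlinarith [sq_nonneg (σ i - σ j), ha_nonneg i j]
  have hCXY : 2 * C = X + Y := by
    have hx : X = ∑ j, ∑ i, σ i * σ i * a i j := by
      rw [hX_def]
      simp only [Finset.mul_sum]
      exact Finset.sum_comm
    have hy : Y = ∑ j, ∑ i, σ j * σ j * a i j := by
      rw [hY_def]
      simp only [Finset.mul_sum]
    have h2 : 2 * C = ∑ j, ∑ i, (σ i * σ i * a i j + σ j * σ j * a i j) := by
      rw [hC_def, Finset.mul_sum]
      refine Finset.sum_congr rfl fun j _ => ?_
      rw [Finset.mul_sum]
      exact Finset.sum_congr rfl fun i _ => by ring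
    rw [h2, hx, hy, ← Finset.sum_add_distrib]
    exact Finset.sum_congr rfl fun j _ => Finset.sum_add_distrib
  have hX_le_S : X ≤ S := by
    rw [hX_def, hS_def]
    refine Finset.sum_le_sum fun i _ => ?_
    have h := mul_le_mul_of_nonneg_left (hrow1 i)
      (mul_nonneg (hσpos i).le (hσpos i).le)
    simpa using h
  have hY_le_S : Y ≤ S := by
    rw [hY_def, hS_def]
    refine Finset.sum_le_sum fun j _ => ?_
    have h := mul_le_mul_of_nonneg_left (hcol1 j)
      (mul_nonneg (hσpos j).le (hσpos j).le)
    simpa using h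
  have hC_le_S : C ≤ S := by linarith
  have hBS : B = S := le_antisymm (le_trans hB_le_C hC_le_S) hS_le_B
  have hCS : C = S := le_antisymm hC_le_S (hS_le_B.trans hB_le_C)
  have hXS : X = S := by linarith
  have hYS : Y = S := by linarith
  -- extraction (1): re (c i j) = a i j
  have hre_eq : ∀ i j, (c i j).re = a i j := by
    have hzero : ∑ j, ∑ i, (σ i * σ j * a i j - σ j * (σ i * (c i j).re)) = 0 := by
      simp only [Finset.sum_sub_distrib]
      rw [← hB_def, ← hSB]
      linarith
    intro i j
    have h0 : ∀ j i, (0:ℝ) ≤ σ i * σ j * a i j - σ j * (σ i * (c i j).re) := by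
      intro j i
      have h1 := mul_le_mul_of_nonneg_left (hre_le i j)
        (mul_nonneg (hσpos i).le (hσpos j).le)
      nlinarith [h1]
    have hz := double_sum_eq_zero
      (f := fun j i => σ i * σ j * a i j - σ j * (σ i * (c i j).re)) h0 hzero j i
    have hσij : 0 < σ i * σ j := mul_pos (hσpos i) (hσpos j)
    have h2 : σ i * σ j * (a i j - (c i j).re) = 0 := by linarith [hz]
    rcases mul_eq_zero.mp h2 with h | h
    · exact absurd h (ne_of_gt hσij)
    · linarith
  -- extraction (2): a i j ≠ 0 → σ i = σ j
  have hσeq' : ∀ i j, a i j ≠ 0 → σ i = σ j := by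
    have hzero : ∑ j, ∑ i,
        (((σ i * σ i + σ j * σ j)/2) * a i j - σ i * σ j * a i j) = 0 := by
      simp only [Finset.sum_sub_distrib]
      rw [← hC_def, ← hB_def]
      linarith
    intro i j hne
    have h0 : ∀ j i, (0:ℝ) ≤ ((σ i * σ i + σ j * σ j)/2) * a i j - σ i * σ j * a i j := by
      intro j i
      nlinarith [sq_nonneg (σ i - σ j), ha_nonneg i j]
    have hz := double_sum_eq_zero
      (f := fun j i => ((σ i * σ i + σ j * σ j)/2) * a i j - σ i * σ j * a i j) h0 hzero j i
    have h2 : (σ i - σ j)^2 * a i j = 0 := by linear_combination 2 * hz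
    rcases mul_eq_zero.mp h2 with h | h
    · have := pow_eq_zero_iff (n := 2) (by norm_num) |>.mp h
      linarith [sub_eq_zero.mp this]
    · exact absurd h hne
  -- extraction (3): all column sums and row sums equal 1
  have hcol_eq : ∀ j, ∑ i, a i j = 1 := by
    have hzero : ∑ j, (σ j * σ j - σ j * σ j * (∑ i, a i j)) = 0 := by
      rw [Finset.sum_sub_distrib, ← hS_def, ← hY_def]
      linarith
    intro j
    have h0 : ∀ k ∈ Finset.univ, (0:ℝ) ≤ σ k * σ k - σ k * σ k * (∑ i, a i k) := by
      intro k _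
      have h1 := mul_le_mul_of_nonneg_left (hcol1 k)
        (mul_nonneg (hσpos k).le (hσpos k).le)
      nlinarith [h1]
    have hz := (Finset.sum_eq_zero_iff_of_nonneg h0).mp hzero j (Finset.mem_univ j)
    have hσj : 0 < σ j * σ j := mul_pos (hσpos j) (hσpos j)
    have h2 : σ j * σ j * (1 - ∑ i, a i j) = 0 := by linarith [hz]
    rcases mul_eq_zero.mp h2 with h | h
    · exact absurd h (ne_of_gt hσj)
    · linarith
  have hrow_eq : ∀ i, ∑ j, a i j = 1 := by
    have hzero : ∑ i, (σ i * σ i - σ i * σ i * (∑ j, a i j)) = 0 := by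
      rw [Finset.sum_sub_distrib, ← hS_def, ← hX_def]
      linarith
    intro i
    have h0 : ∀ k ∈ Finset.univ, (0:ℝ) ≤ σ k * σ k - σ k * σ k * (∑ j, a k j) := by
      intro k _
      have h1 := mul_le_mul_of_nonneg_left (hrow1 k)
        (mul_nonneg (hσpos k).le (hσpos k).le)
      nlinarith [h1]
    have hz := (Finset.sum_eq_zero_iff_of_nonneg h0).mp hzero i (Finset.mem_univ i)
    have hσi : 0 < σ i * σ i := mul_pos (hσpos i) (hσpos i)
    have h2 : σ i * σ i * (1 - ∑ j, a i j) = 0 := by linarith [hz]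
    rcases mul_eq_zero.mp h2 with h | h
    · exact absurd h (ne_of_gt hσi)
    · linarith
  -- extraction (4): every a i j is 0 or 1
  have h01 : ∀ i j, a i j = 0 ∨ a i j = 1 := by
    intro i j
    have hle1 : ∀ k ∈ Finset.univ, a k j ≤ a k j ^ s :=
      fun k _ => hpw _ (ha_nonneg k j) (ha_le_one k j)
    have hsum_eq : ∑ k, a k j = ∑ k, a k j ^ s := by
      refine le_antisymm (Finset.sum_le_sum hle1) ?_
      calc ∑ k, a k j ^ s ≤ 1 := hcol_s j
      _ = ∑ k, a k j := (hcol_eq j).symm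
    have hpt : a i j = a i j ^ s :=
      (Finset.sum_eq_sum_iff_of_le hle1).mp hsum_eq i (Finset.mem_univ i)
    by_contra hcon
    push_neg at hcon
    obtain ⟨h0, h1⟩ := hcon
    have hpos : 0 < a i j := lt_of_le_of_ne (ha_nonneg i j) (Ne.symm h0)
    have hlt1 : a i j < 1 := lt_of_le_of_ne (ha_le_one i j) h1
    have hlt : a i j ^ (1:ℝ) < a i j ^ s :=
      Real.rpow_lt_rpow_of_exponent_gt hpos hlt1 hs_lt
    rw [Real.rpow_one, ← hpt] at hlt
    exact lt_irrefl _ hlt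
  -- existence of the permutation
  have hex : ∀ j, ∃ i, a i j = 1 := by
    intro j
    by_contra h
    push_neg at h
    have hall : ∀ i ∈ Finset.univ, a i j = 0 := fun i _ => (h01 i j).resolve_right (h i)
    exact one_ne_zero (by rw [← hcol_eq j, Finset.sum_eq_zero hall])
  obtain ⟨f, hfa⟩ : ∃ f : Fin r → Fin r, ∀ j, a (f j) j = 1 :=
    ⟨fun j => Classical.choose (hex j), fun j => Classical.choose_spec (hex j)⟩
  have hinj : Function.Injective f := by
    intro j j' hjj
    by_contra hne
    have hsub : ({j, j'} : Finset (Fin r)) ⊆ univ := Finset.subset_univ _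
    have h2 := Finset.sum_le_sum_of_subset_of_nonneg hsub
      (fun k _ _ => ha_nonneg (f j) k)
    rw [Finset.sum_pair hne] at h2
    have h3 : a (f j) j' = 1 := by rw [hjj]; exact hfa j'
    rw [hfa j, h3] at h2
    linarith [hrow_eq (f j), h2]
  have hc1 : ∀ j, c (f j) j = 1 := by
    intro j
    have hre := hre_eq (f j) j
    have hn : ‖c (f j) j‖ = 1 := by rw [← ha_def]; exact hfa j
    have hnsq : (c (f j) j).re * (c (f j) j).re + (c (f j) j).im * (c (f j) j).im = 1 := by
      have h := Complex.sq_norm (c (f j) j)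
      rw [Complex.normSq_apply] at h
      rw [← h, hn]
      norm_num
    have hre1 : (c (f j) j).re = 1 := by rw [hre]; exact hfa j
    have him : (c (f j) j).im = 0 := by
      have : (c (f j) j).im * (c (f j) j).im = 0 := by rw [hre1] at hnsq; linarith
      exact mul_self_eq_zero.mp this
    apply Complex.ext
    · simpa using hre1
    · simpa using him
  have hweq : ∀ j, w j = v (f j) := by
    intro j
    have h1 : (inner ℂ (v (f j)) (w j) : ℂ) = 1 := by rw [← hc_def]; exact hc1 j
    have h2 : (inner ℂ (w j) (v (f j)) : ℂ) = 1 := by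
      rw [← inner_conj_symm, h1]; simp
    have hsub : (inner ℂ (v (f j) - w j) (v (f j) - w j) : ℂ) = 0 := by
      rw [inner_sub_sub_self, inner_self_eq_norm_sq_to_K, inner_self_eq_norm_sq_to_K,
        hvunit, hwunit, h1, h2]
      norm_num
    have h3 := sub_eq_zero.mp (inner_self_eq_zero.mp hsub)
    exact h3.symm
  have hσf : ∀ j, σ (f j) = σ j := by
    intro j
    refine hσeq' (f j) j ?_
    rw [hfa j]; norm_num
  refine ⟨Equiv.ofBijective f (Finite.injective_iff_bijective.mp hinj), fun j => ?_⟩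
  show (σ j : ℂ) • w j = (σ (f j) : ℂ) • v (f j)
  rw [hσf j, hweq j]
end
end

section
/- Let per_n = ∑_{σ ∈ S_n} e_{σ(1)} ⊗ e_{σ(2)} ⊗ ⋯ ⊗ e_{σ(n)} ∈ (ℂ^n)^{⊗n} be the permanent tensor. Then ‖per_n‖_⋆ = n^{n/2}. -/
noncomputable section

open Finset

variable {d : ℕ} {ι : Fin d → Type*} [∀ e, Fintype (ι e)]

/-- The permanent tensor `per_n = ∑_{σ ∈ S_n} e_{σ(1)} ⊗ ⋯ ⊗ e_{σ(n)} ∈ (ℂⁿ)^{⊗n}`. -/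
def perTensor (n : ℕ) : TensorSpace (fun _ : Fin n => Fin n) :=
  WithLp.toLp 2 (fun f => if Function.Bijective f then 1 else 0)

section PerAux

variable {n : ℕ}

def perR (b : Fin n → Fin n → ℝ) : ℝ := ∑ σ : Equiv.Perm (Fin n), ∏ e, b e (σ e)

def cw (b : Fin n → Fin n → ℝ) (j k : Fin n) : ℝ :=
  ∑ σ ∈ univ.filter (fun σ : Equiv.Perm (Fin n) => σ j = k), ∏ e ∈ univ.erase j, b e (σ e)

lemma cw_nonneg {b : Fin n → Fin n → ℝ} (hb : ∀ e k, 0 ≤ b e k) (j k : Fin n) : 0 ≤ cw b j k :=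
  Finset.sum_nonneg fun σ _ => Finset.prod_nonneg fun e _ => hb e (σ e)

lemma perR_update (b : Fin n → Fin n → ℝ) (j : Fin n) (y : Fin n → ℝ) :
    perR (Function.update b j y) = ∑ k, y k * cw b j k := by
  unfold perR
  have h1 : ∀ σ : Equiv.Perm (Fin n),
      (∏ e, Function.update b j y e (σ e)) = y (σ j) * ∏ e ∈ univ.erase j, b e (σ e) := by
    intro σ
    rw [← Finset.mul_prod_erase univ _ (mem_univ j), Function.update_self]
    congr 1
    exact Finset.prod_congr rfl fun e he => by
      rw [Function.update_of_ne (Finset.ne_of_mem_erase he)]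
  simp only [h1]
  rw [← Finset.sum_fiberwise univ (fun σ : Equiv.Perm (Fin n) => σ j)
    (fun σ => y (σ j) * ∏ e ∈ univ.erase j, b e (σ e))]
  refine Finset.sum_congr rfl fun k _ => ?_
  rw [cw, Finset.mul_sum]
  refine Finset.sum_congr rfl fun σ hσ => ?_
  rw [(Finset.mem_filter.1 hσ).2]

lemma perR_eq_sum_cw (b : Fin n → Fin n → ℝ) (j : Fin n) :
    perR b = ∑ k, b j k * cw b j k := by
  conv_lhs => rw [← Function.update_eq_self j b]
  exact perR_update b j (b j)

lemma perR_comp (b : Fin n → Fin n → ℝ) (τ : Equiv.Perm (Fin n)) :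
    perR (b ∘ τ) = perR b := by
  unfold perR
  have h1 : ∀ σ : Equiv.Perm (Fin n),
      (∏ e, (b ∘ τ) e (σ e)) = ∏ e, b e ((σ * τ⁻¹) e) := by
    intro σ
    rw [← Equiv.prod_comp τ (fun e => b e ((σ * τ⁻¹) e))]
    simp [Equiv.Perm.mul_apply]
  simp only [h1]
  exact Fintype.sum_equiv (Equiv.mulRight τ⁻¹) _ _ (fun σ => rfl)

lemma perR_nonneg {b : Fin n → Fin n → ℝ} (hb : ∀ e k, 0 ≤ b e k) : 0 ≤ perR b :=
  Finset.sum_nonneg fun σ _ => Finset.prod_nonneg fun e _ => hb e (σ e)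

lemma perR_smul_cols (c : Fin n → ℝ) (d : Fin n → Fin n → ℝ) :
    perR (fun e k => c e * d e k) = (∏ e, c e) * perR d := by
  unfold perR
  rw [Finset.mul_sum]
  exact Finset.sum_congr rfl fun σ _ => by rw [Finset.prod_mul_distrib]

lemma LM {x w : Fin n → ℝ} {M : ℝ} (hM : 0 < M) (hw : ∀ k, 0 ≤ w k)
    (hx1 : ∑ k, x k ^ 2 = 1) (hxw : ∑ k, x k * w k = M)
    (hmax : ∀ y : Fin n → ℝ, (∀ k, 0 ≤ y k) → (∑ k, y k ^ 2 = 1) → ∑ k, y k * w k ≤ M) :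
    ∀ k, w k = M * x k := by
  set s := ∑ k, w k ^ 2 with hs
  have hs0 : 0 ≤ s := Finset.sum_nonneg fun k _ => sq_nonneg _
  have hsM : s ≤ M ^ 2 := by
    rcases eq_or_lt_of_le hs0 with h0 | hpos
    · nlinarith
    · set t := Real.sqrt s with ht
      have htpos : 0 < t := Real.sqrt_pos.2 hpos
      have ht2 : t ^ 2 = s := Real.sq_sqrt hs0
      have h1 : ∑ k, (w k / t) ^ 2 = 1 := by
        have e1 : ∑ k, (w k / t) ^ 2 = (∑ k, w k ^ 2) / t ^ 2 := by
          rw [Finset.sum_div]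
          exact Finset.sum_congr rfl fun k _ => by ring
        rw [e1, ← hs, ← ht2, div_self (by positivity)]
      have h2 : ∑ k, (w k / t) * w k ≤ M :=
        hmax _ (fun k => div_nonneg (hw k) htpos.le) h1
      have h3 : ∑ k, (w k / t) * w k = s / t := by
        rw [hs, Finset.sum_div]
        exact Finset.sum_congr rfl fun k _ => by ring
      have h4 : s / t = t := by
        rw [← ht2]; field_simp
      have h5 : t ≤ M := by rw [h3, h4] at h2; exact h2
      nlinarith
  have hkey : ∑ k, (w k - M * x k) ^ 2 ≤ 0 := by
    have e2 : ∑ k, (w k - M * x k) ^ 2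
        = (∑ k, w k ^ 2) - 2 * M * (∑ k, x k * w k) + M ^ 2 * ∑ k, x k ^ 2 := by
      rw [Finset.mul_sum, Finset.mul_sum, ← Finset.sum_sub_distrib, ← Finset.sum_add_distrib]
      exact Finset.sum_congr rfl fun k _ => by ring
    rw [e2, hxw, hx1, ← hs]
    nlinarith
  intro k
  have h6 : (w k - M * x k) ^ 2 = 0 := by
    have h7 : (w k - M * x k) ^ 2 ≤ ∑ j, (w j - M * x j) ^ 2 :=
      Finset.single_le_sum (f := fun j => (w j - M * x j) ^ 2) (fun j _ => sq_nonneg _)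
        (mem_univ k)
    nlinarith [sq_nonneg (w k - M * x k)]
  have h8 := pow_eq_zero_iff (n := 2) (by norm_num) |>.1 h6
  linarith [sub_eq_zero.1 h8]

set_option maxHeartbeats 2000000 in
theorem perR_le (hn : 0 < n) (b : Fin n → Fin n → ℝ)
    (hb0 : ∀ e k, 0 ≤ b e k) (hb1 : ∀ e, ∑ k, b e k ^ 2 = 1) :
    perR b ≤ (Nat.factorial n : ℝ) * (n : ℝ) ^ (-(n : ℝ) / 2) := by
  classical
  have hn' : (0 : ℝ) < n := by exact_mod_cast hn
  set K : Set (Fin n → ℝ) := {x | (∀ k, 0 ≤ x k) ∧ ∑ k, x k ^ 2 = 1} with hKdef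
  have hKc : IsCompact K := by
    have hcl : IsClosed K := by
      have h1 : IsClosed {x : Fin n → ℝ | ∀ k, 0 ≤ x k} := by
        have : {x : Fin n → ℝ | ∀ k, 0 ≤ x k} = ⋂ k, {x | 0 ≤ x k} := by
          ext x; simp [Set.mem_iInter]
        rw [this]
        exact isClosed_iInter fun k => isClosed_le continuous_const (continuous_apply k)
      have h2 : IsClosed {x : Fin n → ℝ | ∑ k, x k ^ 2 = 1} :=
        isClosed_eq (by continuity) continuous_const
      have : K = {x : Fin n → ℝ | ∀ k, 0 ≤ x k} ∩ {x | ∑ k, x k ^ 2 = 1} := by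
        ext x; simp only [hKdef, Set.mem_setOf_eq, Set.mem_inter_iff]
      rw [this]; exact h1.inter h2
    have hbd : Bornology.IsBounded K := by
      apply Bornology.IsBounded.subset (Metric.isBounded_closedBall (x := (0 : Fin n → ℝ)) (r := 1))
      intro x hx
      rw [Metric.mem_closedBall, dist_zero_right]
      rw [pi_norm_le_iff_of_nonneg (by norm_num)]
      intro k
      have h3 : x k ^ 2 ≤ 1 := by
        have := Finset.single_le_sum (f := fun k => x k ^ 2) (fun j _ => sq_nonneg _) (mem_univ k)
        rw [hx.2] at this; exact this
      have : |x k| ≤ 1 := by nlinarith [sq_abs (x k), abs_nonneg (x k)]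
      simpa using this
    exact Metric.isCompact_of_isClosed_isBounded hcl hbd
  set F : Set (Fin n → Fin n → ℝ) := Set.pi Set.univ (fun _ : Fin n => K) with hFdef
  have hFc : IsCompact F := isCompact_univ_pi fun _ => hKc
  have hx₀K : (fun _ => Real.sqrt (n : ℝ)⁻¹) ∈ K := by
    constructor
    · intro k; positivity
    · rw [Finset.sum_const, Real.sq_sqrt (by positivity), card_univ, Fintype.card_fin,
        nsmul_eq_mul, mul_inv_cancel₀ (by positivity)]
  have hFne : F.Nonempty := ⟨fun _ _ => Real.sqrt (n : ℝ)⁻¹, fun e _ => hx₀K⟩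
  have hcont : Continuous (perR (n := n)) := by
    unfold perR
    exact continuous_finset_sum _ fun σ _ => continuous_finset_prod _ fun e _ =>
      (continuous_apply (σ e)).comp (continuous_apply e)
  obtain ⟨b₁, hb₁F, hb₁max⟩ := hFc.exists_isMaxOn hFne hcont.continuousOn
  set M := perR b₁ with hMdef
  have hbF : b ∈ F := fun e _ => ⟨hb0 e, hb1 e⟩
  have hM : 0 < M := by
    have h₀ : perR (fun _ _ => Real.sqrt (n : ℝ)⁻¹) ≤ M := hb₁max (fun e _ => hx₀K)
    have h₁ : perR (n := n) (fun _ _ => Real.sqrt (n : ℝ)⁻¹)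
        = (Fintype.card (Equiv.Perm (Fin n)) : ℝ) * Real.sqrt (n : ℝ)⁻¹ ^ n := by
      unfold perR
      simp [Finset.prod_const, Finset.card_univ, Finset.sum_const, nsmul_eq_mul]
    have hcard : 0 < Fintype.card (Equiv.Perm (Fin n)) := Fintype.card_pos
    have hsq : 0 < Real.sqrt (n : ℝ)⁻¹ := Real.sqrt_pos.2 (by positivity)
    have h₂ : 0 < (Fintype.card (Equiv.Perm (Fin n)) : ℝ) * Real.sqrt (n : ℝ)⁻¹ ^ n := by
      positivity
    rw [h₁] at h₀; linarith
  -- second maximization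
  set g : (Fin n → Fin n → ℝ) → ℝ := fun b => ∑ k, (∑ e, b e k) ^ 2 with hgdef
  have hgcont : Continuous g := by
    apply continuous_finset_sum
    intro k _
    exact (continuous_finset_sum _ fun e _ =>
      (continuous_apply k).comp (continuous_apply e)).pow 2
  set F2 : Set (Fin n → Fin n → ℝ) := F ∩ {b | perR b = M} with hF2def
  have hF2c : IsCompact F2 := hFc.inter_right (isClosed_eq hcont continuous_const)
  have hF2ne : F2.Nonempty := ⟨b₁, hb₁F, rfl⟩
  obtain ⟨bb, hbbF2, hbbg⟩ := hF2c.exists_isMaxOn hF2ne hgcont.continuousOn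
  have hbbF : bb ∈ F := hbbF2.1
  have hbbM : perR bb = M := hbbF2.2
  have hbb0 : ∀ e k, 0 ≤ bb e k := fun e k => (hbbF e (Set.mem_univ e)).1 k
  -- all columns of bb are equal
  have hcols : ∀ i j : Fin n, bb i = bb j := by
    intro i j
    rcases eq_or_ne i j with rfl | hij
    · rfl
    by_contra hne
    have hx₁K : bb i ∈ K := hbbF i (Set.mem_univ i)
    have hx₂K : bb j ∈ K := hbbF j (Set.mem_univ j)
    have hupdF : ∀ (a : Fin n) (y : Fin n → ℝ), y ∈ K → Function.update bb a y ∈ F := by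
      intro a y hy e _
      rcases eq_or_ne e a with rfl | hea
      · rw [Function.update_self]; exact hy
      · rw [Function.update_of_ne hea]; exact hbbF e (Set.mem_univ e)
    have hkey : ∀ a : Fin n, ∀ k, cw bb a k = M * bb a k := by
      intro a
      refine LM hM (cw_nonneg hbb0 a) (hbbF a (Set.mem_univ a)).2 ?_ ?_
      · rw [← perR_eq_sum_cw bb a]; exact hbbM
      · intro y hy0 hy1
        rw [← perR_update bb a y]
        exact hb₁max (hupdF a y ⟨hy0, hy1⟩)
    set c := ∑ k, bb i k * bb j k with hcdef
    have hc0 : 0 ≤ c := Finset.sum_nonneg fun k _ => mul_nonneg (hx₁K.1 k) (hx₂K.1 k)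
    have hdiff : 0 < ∑ k, (bb i k - bb j k) ^ 2 := by
      obtain ⟨k₀, hk₀⟩ := Function.ne_iff.1 hne
      have h1 : 0 < (bb i k₀ - bb j k₀) ^ 2 := by
        have h2 := sub_ne_zero.2 hk₀
        positivity
      have h2 : (bb i k₀ - bb j k₀) ^ 2 ≤ ∑ k, (bb i k - bb j k) ^ 2 :=
        Finset.single_le_sum (f := fun k => (bb i k - bb j k) ^ 2)
          (fun k _ => sq_nonneg _) (mem_univ k₀)
      linarith
    have hexp : ∑ k, (bb i k - bb j k) ^ 2 = 2 - 2 * c := by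
      have h1 : ∀ k, (bb i k - bb j k) ^ 2
          = bb i k ^ 2 + bb j k ^ 2 - 2 * (bb i k * bb j k) := fun k => by ring
      simp only [h1]
      rw [Finset.sum_sub_distrib, Finset.sum_add_distrib, hx₁K.2, hx₂K.2,
        ← Finset.mul_sum, ← hcdef]
      ring
    have hclt : c < 1 := by linarith
    set s := 2 + 2 * c with hsdef
    have hspos : 0 < s := by rw [hsdef]; linarith
    have hs4 : s < 4 := by rw [hsdef]; linarith
    have hps : ∑ k, (bb i k + bb j k) ^ 2 = s := by
      have h1 : ∀ k, (bb i k + bb j k) ^ 2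
          = bb i k ^ 2 + bb j k ^ 2 + 2 * (bb i k * bb j k) := fun k => by ring
      simp only [h1]
      rw [Finset.sum_add_distrib, Finset.sum_add_distrib, hx₁K.2, hx₂K.2,
        ← Finset.mul_sum, ← hcdef, hsdef]
      ring
    set t := Real.sqrt s⁻¹ with htdef
    have ht2 : t ^ 2 = s⁻¹ := Real.sq_sqrt (by positivity)
    have htpos : 0 < t := Real.sqrt_pos.2 (by positivity)
    have hts : t ^ 2 * s = 1 := by rw [ht2]; field_simp
    have hthalf : 1 / 2 < t := by
      have h4 : 1 < 4 * t ^ 2 := by nlinarith [hts, hs4, mul_pos htpos htpos]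
      nlinarith [h4, htpos]
    set u := fun k => t * (bb i k + bb j k) with hudef
    have huK : u ∈ K := by
      constructor
      · intro k
        exact mul_nonneg htpos.le (add_nonneg (hx₁K.1 k) (hx₂K.1 k))
      · have h1 : ∑ k, u k ^ 2 = t ^ 2 * ∑ k, (bb i k + bb j k) ^ 2 := by
          rw [Finset.mul_sum]
          exact Finset.sum_congr rfl fun k _ => by simp only [hudef]; ring
        rw [h1, hps, hts]
    set b' := Function.update (Function.update bb i u) j u with hb'def
    have hb'F : b' ∈ F := by
      intro e _
      rcases eq_or_ne e j with rfl | hej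
      · rw [hb'def, Function.update_self]; exact huK
      rw [hb'def, Function.update_of_ne hej]
      rcases eq_or_ne e i with rfl | hei
      · rw [Function.update_self]; exact huK
      · rw [Function.update_of_ne hei]; exact hbbF e (Set.mem_univ e)
    have hlin : ∀ (C : Fin n → Fin n → ℝ) (a : Fin n),
        perR (Function.update C a u)
          = t * perR (Function.update C a (bb i)) + t * perR (Function.update C a (bb j)) := by
      intro C a
      rw [perR_update, perR_update, perR_update, Finset.mul_sum, Finset.mul_sum,
        ← Finset.sum_add_distrib]
      exact Finset.sum_congr rfl fun k _ => by simp only [hudef]; ring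
    have hP11 : perR (Function.update (Function.update bb j (bb i)) i (bb i)) = M * c := by
      have h1 : Function.update (Function.update bb j (bb i)) i (bb i)
          = Function.update bb j (bb i) := by
        funext e
        rcases eq_or_ne e i with rfl | hei
        · rw [Function.update_self, Function.update_of_ne hij]
        · rw [Function.update_of_ne hei]
      rw [h1, perR_update]
      simp only [hkey j]
      rw [hcdef, Finset.mul_sum]
      exact Finset.sum_congr rfl fun k _ => by ring
    have hP21 : perR (Function.update (Function.update bb j (bb i)) i (bb j)) = M := by
      have h1 : (Function.update (Function.update bb j (bb i)) i (bb j)) ∘ (Equiv.swap i j)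
          = bb := by
        funext a
        simp only [Function.comp_apply]
        rcases eq_or_ne a i with rfl | hai
        · rw [Equiv.swap_apply_left, Function.update_of_ne hij.symm, Function.update_self]
        rcases eq_or_ne a j with rfl | haj
        · rw [Equiv.swap_apply_right, Function.update_self]
        · rw [Equiv.swap_apply_of_ne_of_ne hai haj, Function.update_of_ne hai,
            Function.update_of_ne haj]
      have h2 := perR_comp (Function.update (Function.update bb j (bb i)) i (bb j))
        (Equiv.swap i j)
      rw [h1] at h2
      rw [← h2, hbbM]
    have hP12 : perR (Function.update (Function.update bb j (bb j)) i (bb i)) = M := by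
      rw [Function.update_eq_self j bb, Function.update_eq_self i bb, hbbM]
    have hP22 : perR (Function.update (Function.update bb j (bb j)) i (bb j)) = M * c := by
      rw [Function.update_eq_self j bb, perR_update]
      simp only [hkey i]
      rw [hcdef, Finset.mul_sum]
      exact Finset.sum_congr rfl fun k _ => by ring
    have hperRb' : perR b' = M := by
      rw [hb'def, hlin (Function.update bb i u) j,
        Function.update_comm hij u (bb i) bb, Function.update_comm hij u (bb j) bb,
        hlin (Function.update bb j (bb i)) i, hlin (Function.update bb j (bb j)) i,
        hP11, hP21, hP12, hP22]
      have hts' : t ^ 2 * (2 + 2 * c) = 1 := by rw [← hsdef]; exact hts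
      linear_combination M * hts'
    have hb'F2 : b' ∈ F2 := ⟨hb'F, hperRb'⟩
    have hgle : g b' ≤ g bb := hbbg hb'F2
    have hsum_upd : ∀ (C : Fin n → Fin n → ℝ) (a : Fin n) (y : Fin n → ℝ) (k : Fin n)
        (S : Finset (Fin n)), a ∈ S →
        ∑ e ∈ S, Function.update C a y e k = y k + ∑ e ∈ S.erase a, C e k := by
      intro C a y k S haS
      have h1 : ∀ e, Function.update C a y e k = Function.update (fun e => C e k) a (y k) e :=
        fun e => Function.apply_update (fun _ col => col k) C a y e
      simp only [h1]
      rw [← Finset.add_sum_erase _ _ haS, Function.update_self]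
      congr 1
      exact Finset.sum_congr rfl fun e he =>
        Function.update_of_ne (Finset.ne_of_mem_erase he) _ _
    have hb'sum : ∀ k, ∑ e, b' e k
        = (∑ e, bb e k) + (2 * t - 1) * (bb i k + bb j k) := by
      intro k
      have hiej : i ∈ univ.erase j := Finset.mem_erase.2 ⟨hij, mem_univ i⟩
      rw [hb'def, hsum_upd _ j u k univ (mem_univ j), hsum_upd _ i u k (univ.erase j) hiej]
      have h3 : ∑ e, bb e k = bb j k + (bb i k + ∑ e ∈ (univ.erase j).erase i, bb e k) := by
        rw [← Finset.add_sum_erase _ _ (mem_univ j), ← Finset.add_sum_erase _ _ hiej]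
      rw [h3]
      simp only [hudef]
      ring
    have hgb' : g b' = g bb + ((2 * t - 1) ^ 2 * s
        + 2 * (2 * t - 1) * ∑ k, (∑ e, bb e k) * (bb i k + bb j k)) := by
      simp only [hgdef, hb'sum]
      have h1 : ∀ k, ((∑ e, bb e k) + (2 * t - 1) * (bb i k + bb j k)) ^ 2
          = (∑ e, bb e k) ^ 2 + ((2 * t - 1) ^ 2 * (bb i k + bb j k) ^ 2
            + 2 * (2 * t - 1) * ((∑ e, bb e k) * (bb i k + bb j k))) := fun k => by ring
      simp only [h1]
      rw [Finset.sum_add_distrib, Finset.sum_add_distrib, ← Finset.mul_sum, ← Finset.mul_sum,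
        hps]
    have hSp : s ≤ ∑ k, (∑ e, bb e k) * (bb i k + bb j k) := by
      rw [← hps]
      apply Finset.sum_le_sum
      intro k _
      have hpk : 0 ≤ bb i k + bb j k := add_nonneg (hbb0 i k) (hbb0 j k)
      have hSk : bb i k + bb j k ≤ ∑ e, bb e k := by
        have h4 := Finset.sum_le_sum_of_subset_of_nonneg (Finset.subset_univ {i, j})
          (fun e _ _ => hbb0 e k)
        rwa [Finset.sum_pair hij] at h4
      rw [sq]
      exact mul_le_mul_of_nonneg_right hSk hpk
    have hd : 0 < 2 * t - 1 := by linarith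
    have h9 : 0 < (2 * t - 1) ^ 2 * s := by positivity
    have h10 : 2 * (2 * t - 1) * s ≤ 2 * (2 * t - 1)
        * ∑ k, (∑ e, bb e k) * (bb i k + bb j k) :=
      mul_le_mul_of_nonneg_left hSp (by linarith)
    have h11 : 0 < 2 * (2 * t - 1) * s := by
      have := mul_pos hd hspos; linarith [mul_pos (mul_pos two_pos hd) hspos]
    linarith [hgle, hgb', h9, h10, h11]
  -- conclude
  set i₀ : Fin n := ⟨0, hn⟩ with hi₀def
  have hMval : M = (Nat.factorial n : ℝ) * ∏ k, bb i₀ k := by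
    rw [← hbbM]; unfold perR
    have h1 : ∀ σ : Equiv.Perm (Fin n), ∏ e, bb e (σ e) = ∏ k, bb i₀ k := by
      intro σ
      calc ∏ e, bb e (σ e) = ∏ e, bb i₀ (σ e) :=
            Finset.prod_congr rfl fun e _ => by rw [hcols e i₀]
      _ = ∏ k, bb i₀ k := Equiv.prod_comp σ (bb i₀)
    rw [Finset.sum_congr rfl fun σ _ => h1 σ, Finset.sum_const, card_univ,
      Fintype.card_perm, Fintype.card_fin, nsmul_eq_mul]
  have hxK : bb i₀ ∈ K := hbbF i₀ (Set.mem_univ i₀)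
  have hAM : ∏ k, bb i₀ k ≤ (n : ℝ) ^ (-(n : ℝ) / 2) := by
    have h0 : ∀ k, (0 : ℝ) ≤ bb i₀ k := hxK.1
    have hgm := Real.geom_mean_le_arith_mean_weighted univ (fun _ => (n : ℝ)⁻¹)
      (fun k => bb i₀ k ^ 2) (fun k _ => by positivity)
      (by rw [Finset.sum_const, card_univ, Fintype.card_fin, nsmul_eq_mul,
        mul_inv_cancel₀ (ne_of_gt hn')]) (fun k _ => sq_nonneg _)
    rw [Real.finset_prod_rpow univ _ (fun k _ => sq_nonneg _) _] at hgm
    have hsum : ∑ k, (n : ℝ)⁻¹ * bb i₀ k ^ 2 = (n : ℝ)⁻¹ := by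
      rw [← Finset.mul_sum, hxK.2, mul_one]
    rw [hsum] at hgm
    have hA0 : (0 : ℝ) ≤ ∏ k, bb i₀ k ^ 2 := Finset.prod_nonneg fun k _ => sq_nonneg _
    have h2 : ∏ k, bb i₀ k ^ 2 ≤ ((n : ℝ)⁻¹) ^ (n : ℝ) := by
      have e1 : ((∏ k, bb i₀ k ^ 2) ^ ((n : ℝ)⁻¹)) ^ (n : ℝ) = ∏ k, bb i₀ k ^ 2 := by
        rw [← Real.rpow_mul hA0, inv_mul_cancel₀ (ne_of_gt hn'), Real.rpow_one]
      have e2 := Real.rpow_le_rpow (Real.rpow_nonneg hA0 _) hgm hn'.le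
      rwa [e1] at e2
    have h3 : ((n : ℝ)⁻¹) ^ ((n : ℝ)) = ((n : ℝ) ^ (-(n : ℝ) / 2)) ^ 2 := by
      rw [← Real.rpow_natCast ((n : ℝ) ^ (-(n : ℝ) / 2)) 2, ← Real.rpow_mul hn'.le,
        Real.inv_rpow hn'.le, ← Real.rpow_neg hn'.le]
      norm_num
    have hprodsq : (∏ k, bb i₀ k) ^ 2 = ∏ k, bb i₀ k ^ 2 := by rw [Finset.prod_pow]
    have hτ : (0 : ℝ) ≤ (n : ℝ) ^ (-(n : ℝ) / 2) := Real.rpow_nonneg hn'.le _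
    have hp0 : (0 : ℝ) ≤ ∏ k, bb i₀ k := Finset.prod_nonneg fun k _ => h0 k
    nlinarith [h2, hprodsq, h3]
  calc perR b ≤ M := hb₁max hbF
  _ = (Nat.factorial n : ℝ) * ∏ k, bb i₀ k := hMval
  _ ≤ (Nat.factorial n : ℝ) * (n : ℝ) ^ (-(n : ℝ) / 2) :=
      mul_le_mul_of_nonneg_left hAM (by positivity)

def perC (a : Fin n → Fin n → ℂ) : ℂ := ∑ σ : Equiv.Perm (Fin n), ∏ e, a e (σ e)

set_option maxHeartbeats 1000000 in
theorem perC_bound (a : Fin n → Fin n → ℂ) :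
    ‖perC a‖ ≤ (Nat.factorial n : ℝ) * (n : ℝ) ^ (-(n : ℝ) / 2)
      * ∏ e, Real.sqrt (∑ k, ‖a e k‖ ^ 2) := by
  classical
  rcases Nat.eq_zero_or_pos n with rfl | hn
  · have h1 : perC a = 1 := by
      unfold perC
      simp
    rw [h1]
    simp [Real.rpow_zero]
  have habs : ‖perC a‖ ≤ perR (fun e k => ‖a e k‖) := by
    unfold perC perR
    refine (norm_sum_le _ _).trans ?_
    apply Finset.sum_le_sum
    intro σ _
    exact le_of_eq (norm_prod _ _)
  set ν : Fin n → ℝ := fun e => Real.sqrt (∑ k, ‖a e k‖ ^ 2) with hν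
  by_cases hz : ∀ e, ν e ≠ 0
  · set bmat : Fin n → Fin n → ℝ := fun e k => ‖a e k‖ / ν e with hbmat
    have hνpos : ∀ e, 0 < ν e := fun e =>
      lt_of_le_of_ne (Real.sqrt_nonneg _) (Ne.symm (hz e))
    have hb0 : ∀ e k, 0 ≤ bmat e k := fun e k =>
      div_nonneg (norm_nonneg _) (hνpos e).le
    have hb1 : ∀ e, ∑ k, bmat e k ^ 2 = 1 := by
      intro e
      have hν2 : ν e ^ 2 = ∑ k, ‖a e k‖ ^ 2 :=
        Real.sq_sqrt (Finset.sum_nonneg fun k _ => sq_nonneg _)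
      have h1 : ∑ k, bmat e k ^ 2 = (∑ k, ‖a e k‖ ^ 2) / ν e ^ 2 := by
        rw [Finset.sum_div]
        exact Finset.sum_congr rfl fun k _ => by simp only [hbmat]; rw [div_pow]
      rw [h1, ← hν2, div_self (pow_ne_zero 2 (hz e))]
    have hper : perR (fun e k => ‖a e k‖) = (∏ e, ν e) * perR bmat := by
      rw [← perR_smul_cols]
      congr 1
      funext e k
      simp only [hbmat]
      rw [mul_div_cancel₀ _ (hz e)]
    have hprodν : 0 ≤ ∏ e, ν e := Finset.prod_nonneg fun e _ => (hνpos e).le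
    calc ‖perC a‖ ≤ perR (fun e k => ‖a e k‖) := habs
    _ = (∏ e, ν e) * perR bmat := hper
    _ ≤ (∏ e, ν e) * ((Nat.factorial n : ℝ) * (n : ℝ) ^ (-(n : ℝ) / 2)) :=
        mul_le_mul_of_nonneg_left (perR_le hn bmat hb0 hb1) hprodν
    _ = _ := by ring
  · push_neg at hz
    obtain ⟨e₀, he₀⟩ := hz
    have hsum0 : ∑ k, ‖a e₀ k‖ ^ 2 = 0 := by
      have h1 := Real.sqrt_eq_zero'.1 he₀
      have h2 : 0 ≤ ∑ k, ‖a e₀ k‖ ^ 2 := Finset.sum_nonneg fun k _ => sq_nonneg _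
      linarith
    have hcol : ∀ k, ‖a e₀ k‖ = 0 := by
      intro k
      have h3 := (Finset.sum_eq_zero_iff_of_nonneg (fun k _ => sq_nonneg _)).1 hsum0 k (mem_univ k)
      exact pow_eq_zero_iff two_ne_zero |>.1 h3
    have h1 : perR (fun e k => ‖a e k‖) = 0 := by
      unfold perR
      exact Finset.sum_eq_zero fun σ _ => Finset.prod_eq_zero (mem_univ e₀) (hcol (σ e₀))
    have h2 : ∏ e, ν e = 0 := Finset.prod_eq_zero (mem_univ e₀) he₀
    rw [h2, mul_zero]
    exact habs.trans (le_of_eq h1)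


lemma sqrt_prod'' {m : Type*} (s : Finset m) (f : m → ℝ) (hf : ∀ i ∈ s, 0 ≤ f i) :
    Real.sqrt (∏ i ∈ s, f i) = ∏ i ∈ s, Real.sqrt (f i) := by
  classical
  induction s using Finset.cons_induction with
  | empty => simp
  | cons i s his ih =>
    rw [Finset.prod_cons, Finset.prod_cons, Real.sqrt_mul (hf i (Finset.mem_cons_self i s)),
      ih (fun j hj => hf j (Finset.mem_cons_of_mem hj))]

lemma sum_bij_perm {n : ℕ} (g : (Fin n → Fin n) → ℂ) :
    ∑ f ∈ univ.filter (fun f : Fin n → Fin n => Function.Bijective f), g f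
      = ∑ σ : Equiv.Perm (Fin n), g ⇑σ := by
  classical
  refine Finset.sum_bij' (fun f hf => Equiv.ofBijective f (Finset.mem_filter.1 hf).2)
    (fun σ _ => ⇑σ) ?_ ?_ ?_ ?_ ?_
  · intro f hf; exact mem_univ _
  · intro σ _
    exact Finset.mem_filter.2 ⟨mem_univ _, σ.bijective⟩
  · intro f hf; rfl
  · intro σ _; exact Equiv.ext fun x => rfl
  · intro f hf; rfl

lemma inner_perTensor {n : ℕ} (T : TensorSpace (fun _ : Fin n => Fin n)) :
    (inner ℂ (perTensor n) T : ℂ) = ∑ σ : Equiv.Perm (Fin n), T ⇑σ := by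
  classical
  rw [PiLp.inner_apply]
  have h1 : ∀ f : Fin n → Fin n,
      (inner ℂ (perTensor n f) (T f) : ℂ) = if Function.Bijective f then T f else 0 := by
    intro f
    rw [RCLike.inner_apply]
    unfold perTensor
    change T f * (starRingEnd ℂ) (if Function.Bijective f then 1 else 0) = _
    by_cases hf : Function.Bijective f
    · rw [if_pos hf, if_pos hf, map_one, mul_one]
    · rw [if_neg hf, if_neg hf, map_zero, mul_zero]
  rw [Finset.sum_congr rfl fun f _ => h1 f, ← Finset.sum_filter, sum_bij_perm]

lemma norm_pure {n : ℕ} (v : TensorSpace (fun _ : Fin n => Fin n))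
    (a : ∀ _ : Fin n, Fin n → ℂ) (ha : ∀ f, v f = ∏ e, a e (f e)) :
    ‖v‖ = ∏ e, Real.sqrt (∑ k, ‖a e k‖ ^ 2) := by
  classical
  rw [EuclideanSpace.norm_eq]
  have h1 : ∀ f : Fin n → Fin n, ‖v f‖ ^ 2 = ∏ e, ‖a e (f e)‖ ^ 2 := by
    intro f
    rw [ha f, norm_prod, ← Finset.prod_pow]
  rw [Finset.sum_congr rfl fun f _ => h1 f]
  have h2 : ∑ f : Fin n → Fin n, ∏ e, ‖a e (f e)‖ ^ 2 = ∏ e, ∑ k, ‖a e k‖ ^ 2 := by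
    rw [← Finset.sum_prod_piFinset univ (fun e k => ‖a e k‖ ^ 2)]
    rw [Fintype.piFinset_univ]
  rw [h2, sqrt_prod'' univ _ (fun e _ => Finset.sum_nonneg fun k _ => sq_nonneg _)]

end PerAux

/-- **Theorem 1.14.** `‖per_n‖⋆ = n^{n/2}`. -/

theorem perTensor_nuclearNorm (n : ℕ) :
    nuclearNorm (perTensor n) = (n : ℝ) ^ ((n : ℝ) / 2) := by
  classical
  set N := (n : ℝ) ^ ((n : ℝ) / 2) with hN
  set τ := (n : ℝ) ^ (-(n : ℝ) / 2) with hτ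
  have hn0 : (0 : ℝ) ≤ n := Nat.cast_nonneg n
  have hτ0 : 0 ≤ τ := Real.rpow_nonneg hn0 _
  have hN0 : 0 ≤ N := Real.rpow_nonneg hn0 _
  have hNτ : N * τ = 1 := by
    rcases Nat.eq_zero_or_pos n with rfl | hn
    · rw [hN, hτ]; norm_num
    · rw [hN, hτ, ← Real.rpow_add (by exact_mod_cast hn)]
      rw [show ((n : ℝ) / 2 + -(n : ℝ) / 2 : ℝ) = 0 by ring, Real.rpow_zero]
  -- the signed decomposition giving the upper bound
  set ε : Bool → ℂ := fun b => if b then 1 else -1 with hε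
  have hεnorm : ∀ b, ‖ε b‖ = 1 := by intro b; cases b <;> simp [hε]
  have hsumε : ∀ m : ℕ, (∑ b : Bool, ε b ^ m) = if Even m then 2 else 0 := by
    intro m
    rw [Fintype.sum_bool]
    have ht : ε true = 1 := by simp [hε]
    have hf : ε false = -1 := by simp [hε]
    rw [ht, hf, one_pow]
    by_cases he : Even m
    · rw [if_pos he, he.neg_one_pow]; norm_num
    · rw [if_neg he, (Nat.not_even_iff_odd.1 he).neg_one_pow]; norm_num
  set V : (Fin n → Bool) → TensorSpace (fun _ : Fin n => Fin n) :=
    fun s => WithLp.toLp 2 (fun f => ∏ e, ((1 / 2 : ℂ) * ε (s e) * ε (s (f e)))) with hV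
  have hpure : ∀ s, IsPure (V s) :=
    fun s => ⟨fun e j => (1 / 2 : ℂ) * ε (s e) * ε (s j), fun f => rfl⟩
  set m : (Fin n → Fin n) → Fin n → ℕ :=
    fun f j => (univ.filter (fun e => f e = j)).card with hm
  have hbij_iff : ∀ f : Fin n → Fin n, (∀ j, Odd (m f j)) ↔ Function.Bijective f := by
    intro f
    constructor
    · intro h
      have hsurj : Function.Surjective f := by
        intro j
        have h1 : 0 < m f j := Nat.pos_of_ne_zero (by
          intro h0
          have h2 := h j
          rw [h0] at h2
          simp at h2)
        obtain ⟨e, he⟩ := Finset.card_pos.1 h1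
        exact ⟨e, (Finset.mem_filter.1 he).2⟩
      exact (Fintype.bijective_iff_surjective_and_card f).2 ⟨hsurj, rfl⟩
    · intro hb j
      have h3 : univ.filter (fun e => f e = j) = {(Equiv.ofBijective f hb).symm j} := by
        ext e
        simp only [Finset.mem_filter, mem_univ, true_and, Finset.mem_singleton]
        constructor
        · intro he
          apply hb.1
          rw [he]
          have := (Equiv.ofBijective f hb).apply_symm_apply j
          exact this.symm
        · intro he
          rw [he]
          exact (Equiv.ofBijective f hb).apply_symm_apply j
      rw [hm]
      simp only
      rw [h3, Finset.card_singleton]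
      exact odd_one
  have hVval : ∀ s f, V s f = (1 / 2 : ℂ) ^ n * ∏ j, ε (s j) ^ (m f j + 1) := by
    intro s f
    rw [hV]
    simp only
    rw [Finset.prod_mul_distrib, Finset.prod_mul_distrib, Finset.prod_const]
    have hc : (univ : Finset (Fin n)).card = n := by rw [card_univ, Fintype.card_fin]
    rw [hc]
    have h4 : ∏ e, ε (s (f e)) = ∏ j, ε (s j) ^ (m f j) := by
      rw [← Finset.prod_fiberwise' univ f (fun j => ε (s j))]
      exact Finset.prod_congr rfl fun j _ => by rw [Finset.prod_const, hm]
    rw [h4, mul_assoc, ← Finset.prod_mul_distrib]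
    congr 1
    exact Finset.prod_congr rfl fun j _ => by rw [pow_succ, mul_comm]
  have hVsum : ∀ f, (∑ s : Fin n → Bool, V s f) = perTensor n f := by
    intro f
    rw [Finset.sum_congr rfl fun s _ => hVval s f, ← Finset.mul_sum]
    have h5 : (∑ s : Fin n → Bool, ∏ j, ε (s j) ^ (m f j + 1))
        = ∏ j, ∑ b : Bool, ε b ^ (m f j + 1) := by
      rw [← Finset.sum_prod_piFinset univ (fun j b => ε b ^ (m f j + 1)),
        Fintype.piFinset_univ]
    rw [h5, Finset.prod_congr rfl fun j _ => hsumε (m f j + 1)]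
    unfold perTensor
    rw [WithLp.ofLp_toLp]
    by_cases hf : Function.Bijective f
    · rw [if_pos hf]
      have h6 : ∀ j, Odd (m f j) := (hbij_iff f).2 hf
      have h7 : ∀ j ∈ univ, (if Even (m f j + 1) then (2 : ℂ) else 0) = 2 := by
        intro j _
        rw [if_pos (by simpa using (h6 j).add_one)]
      rw [Finset.prod_congr rfl h7, Finset.prod_const]
      rw [card_univ, Fintype.card_fin]
      rw [← mul_pow]
      norm_num
    · rw [if_neg hf]
      obtain ⟨j₀, hj₀⟩ := not_forall.1 ((hbij_iff f).not.2 hf)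
      have h8 : (if Even (m f j₀ + 1) then (2 : ℂ) else 0) = 0 := by
        rw [if_neg]
        simp only [Nat.even_add_one, not_not]
        exact Nat.not_odd_iff_even.1 hj₀
      rw [Finset.prod_eq_zero (mem_univ j₀) h8, mul_zero]
  have hVnorm : ∀ s, ‖V s‖ = (1 / 2 : ℝ) ^ n * N := by
    intro s
    rw [norm_pure (V s) (fun e j => (1 / 2 : ℂ) * ε (s e) * ε (s j)) (fun f => rfl)]
    have h9 : ∀ e j, ‖(1 / 2 : ℂ) * ε (s e) * ε (s j)‖ = 1 / 2 := by
      intro e j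
      rw [norm_mul, norm_mul, hεnorm, hεnorm]
      norm_num
    have h10 : ∀ e : Fin n, ∑ k, ‖(1 / 2 : ℂ) * ε (s e) * ε (s k)‖ ^ 2 = (n : ℝ) / 4 := by
      intro e
      rw [Finset.sum_congr rfl fun k _ => by rw [h9 e k]]
      rw [Finset.sum_const, card_univ, Fintype.card_fin, nsmul_eq_mul]
      norm_num
      ring
    rw [Finset.prod_congr rfl fun e _ => by rw [h10 e]]
    rw [Finset.prod_const, card_univ, Fintype.card_fin]
    have h11 : Real.sqrt ((n : ℝ) / 4) = Real.sqrt n / 2 := by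
      rw [Real.sqrt_div hn0 4, show (4 : ℝ) = 2 ^ 2 by norm_num,
        Real.sqrt_sq (by norm_num : (0:ℝ) ≤ 2)]
    have h12 : Real.sqrt n ^ n = N := by
      rw [hN, Real.sqrt_eq_rpow, ← Real.rpow_natCast ((n : ℝ) ^ ((1 : ℝ) / 2)) n,
        ← Real.rpow_mul hn0]
      congr 1
      ring
    rw [h11, div_pow, h12]
    rw [one_div, inv_pow, div_eq_mul_inv, mul_comm]
  have hcard : Fintype.card (Fin n → Bool) = 2 ^ n := by simp
  set q := Fintype.equivFinOfCardEq hcard with hq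
  set S : Set ℝ := {c : ℝ | ∃ (r : ℕ) (v : Fin r → TensorSpace (fun _ : Fin n => Fin n)),
      (∀ i, IsPure (v i)) ∧ perTensor n = ∑ i, v i ∧ c = ∑ i, ‖v i‖} with hS
  have hmem : N ∈ S := by
    refine ⟨2 ^ n, fun i => V (q.symm i), fun i => hpure _, ?_, ?_⟩
    · ext f
      rw [← hVsum f]
      have h13 : (∑ i, V (q.symm i)) f = ∑ i, V (q.symm i) f := by
          rw [WithLp.ofLp_sum]; exact Finset.sum_apply f univ _
      rw [h13]
      exact (Equiv.sum_comp q.symm (fun s => V s f)).symm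
    · rw [Equiv.sum_comp q.symm (fun s => ‖V s‖)]
      rw [Finset.sum_congr rfl fun s _ => hVnorm s, Finset.sum_const, card_univ, hcard,
        nsmul_eq_mul]
      push_cast
      rw [← mul_assoc, ← mul_pow]
      norm_num
  have hlb : ∀ c ∈ S, N ≤ c := by
    rintro c ⟨r, v, hp, hsum, rfl⟩
    choose a ha using hp
    have hfact : (0 : ℝ) < (Nat.factorial n : ℝ) := by
      exact_mod_cast Nat.factorial_pos n
    have key : (Nat.factorial n : ℂ) = ∑ i, perC (a i) := by
      have h1 : ∀ σ : Equiv.Perm (Fin n), (1 : ℂ) = ∑ i, v i ⇑σ := by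
        intro σ
        have h2 : perTensor n ⇑σ = 1 := by
          unfold perTensor
          rw [WithLp.ofLp_toLp, if_pos σ.bijective]
        rw [← h2, hsum, WithLp.ofLp_sum]
        exact Finset.sum_apply _ _ _
      have h3 : (Nat.factorial n : ℂ) = ∑ _σ : Equiv.Perm (Fin n), (1 : ℂ) := by
        rw [Finset.sum_const, card_univ, Fintype.card_perm, Fintype.card_fin, nsmul_eq_mul,
          mul_one]
      rw [h3, Finset.sum_congr rfl fun σ _ => h1 σ, Finset.sum_comm]
      refine Finset.sum_congr rfl fun i _ => ?_
      unfold perC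
      exact Finset.sum_congr rfl fun σ _ => by rw [ha i ⇑σ]
    have hnormv : ∀ i, ‖v i‖ = ∏ e, Real.sqrt (∑ k, ‖a i e k‖ ^ 2) :=
      fun i => norm_pure (v i) (a i) (ha i)
    have hbound : (Nat.factorial n : ℝ) ≤ (Nat.factorial n : ℝ) * τ * ∑ i, ‖v i‖ := by
      calc (Nat.factorial n : ℝ) = ‖(Nat.factorial n : ℂ)‖ := by
            rw [Complex.norm_natCast]
      _ = ‖∑ i, perC (a i)‖ := by rw [key]
      _ ≤ ∑ i, ‖perC (a i)‖ := norm_sum_le _ _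
      _ ≤ ∑ i, (Nat.factorial n : ℝ) * τ * ‖v i‖ := by
          apply Finset.sum_le_sum
          intro i _
          rw [hnormv i]
          exact perC_bound (a i)
      _ = (Nat.factorial n : ℝ) * τ * ∑ i, ‖v i‖ := by rw [Finset.mul_sum]
    have h1 : 1 ≤ τ * ∑ i, ‖v i‖ := by
      have h2 : (Nat.factorial n : ℝ) * 1 ≤ (Nat.factorial n : ℝ) * (τ * ∑ i, ‖v i‖) := by
        rw [mul_one, ← mul_assoc]
        exact hbound
      exact le_of_mul_le_mul_left h2 hfact
    calc N = N * 1 := by ring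
    _ ≤ N * (τ * ∑ i, ‖v i‖) := mul_le_mul_of_nonneg_left h1 hN0
    _ = N * τ * ∑ i, ‖v i‖ := by ring
    _ = ∑ i, ‖v i‖ := by rw [hNτ, one_mul]
  have hbdd : BddBelow S := by
    refine ⟨0, fun c hc => ?_⟩
    obtain ⟨r, v, _, _, rfl⟩ := hc
    exact Finset.sum_nonneg fun i _ => norm_nonneg _
  rw [nuclearNorm, ← hS]
  exact le_antisymm (csInf_le hbdd hmem) (le_csInf ⟨N, hmem⟩ hlb)
end
end

section
/- Let det_n = ∑_{σ ∈ S_n} sgn(σ) e_{σ(1)} ⊗ e_{σ(2)} ⊗ ⋯ ⊗ e_{σ(n)} ∈ (ℂ^n)^{⊗n} be the determinant tensor. Then ‖det_n‖_⋆ = n!. -/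
noncomputable section

open Finset

variable {d : ℕ} {ι : Fin d → Type*} [∀ e, Fintype (ι e)]

/-- The determinant tensor
`det_n = ∑_{σ ∈ S_n} sgn(σ) e_{σ(1)} ⊗ ⋯ ⊗ e_{σ(n)} ∈ (ℂⁿ)^{⊗n}`. -/
def detTensor (n : ℕ) : TensorSpace (fun _ : Fin n => Fin n) :=
  WithLp.toLp 2 (fun f => if h : Function.Bijective f then
    ((Equiv.Perm.sign (Equiv.ofBijective f h) : ℤ) : ℂ) else 0)

namespace DetNuclear

open Matrix InnerProductSpace

instance (n : ℕ) : WellFoundedLT (Fin n) := Finite.to_wellFoundedLT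

variable {n : ℕ}

local notation "⟪" x ", " y "⟫" => @inner ℂ _ _ x y

/-- Norm of Gram-Schmidt vector is at most the original norm. -/
lemma norm_gramSchmidt_le (a : Fin n → EuclideanSpace ℂ (Fin n)) (i : Fin n) :
    ‖gramSchmidt ℂ a i‖ ≤ ‖a i‖ := by
  set g := gramSchmidt ℂ a with hg
  set s : EuclideanSpace ℂ (Fin n) :=
    ∑ j ∈ Iio i, (⟪g j, a i⟫ / ((‖g j‖ : ℂ) ^ 2)) • g j with hs
  have hai : a i = g i + s := by
    rw [hs, hg]; exact gramSchmidt_def'' ℂ a i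
  have horth : ⟪g i, s⟫ = 0 := by
    rw [hs, inner_sum]
    refine Finset.sum_eq_zero fun j hj => ?_
    rw [inner_smul_right, gramSchmidt_orthogonal ℂ a (Finset.mem_Iio.mp hj).ne', mul_zero]
  have hsq : ‖a i‖ ^ 2 = ‖g i‖ ^ 2 + ‖s‖ ^ 2 := by
    rw [hai]
    rw [@norm_add_sq ℂ _ _ _ _ (g i) s, horth]
    simp
  have h2 : ‖g i‖ ^ 2 ≤ ‖a i‖ ^ 2 := by nlinarith [sq_nonneg ‖s‖]
  exact (pow_le_pow_iff_left₀ (norm_nonneg _) (norm_nonneg _) two_ne_zero).mp h2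

/-- **Hadamard's inequality** for complex matrices, columns version. -/
lemma hadamard (a : Fin n → EuclideanSpace ℂ (Fin n)) :
    ‖(Matrix.of fun k i => a i k).det‖ ≤ ∏ i, ‖a i‖ := by
  set g := gramSchmidt ℂ a with hgdef
  set A : Matrix (Fin n) (Fin n) ℂ := Matrix.of fun k i => a i k with hA
  set G : Matrix (Fin n) (Fin n) ℂ := Matrix.of fun k i => g i k with hG
  set T : Matrix (Fin n) (Fin n) ℂ := Matrix.of fun j i =>
    if j = i then 1 else if j < i then ⟪g j, a i⟫ / ((‖g j‖ : ℂ) ^ 2) else 0 with hT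
  have hAGT : A = G * T := by
    ext k i
    have := congrArg (fun x : EuclideanSpace ℂ (Fin n) => x k) (gramSchmidt_def'' ℂ a i)
    simp only [PiLp.add_apply, PiLp.smul_apply, smul_eq_mul] at this
    rw [WithLp.ofLp_sum, Finset.sum_apply] at this
    simp only [PiLp.smul_apply, smul_eq_mul] at this
    rw [hA, Matrix.mul_apply]
    simp only [Matrix.of_apply]
    have hsplit : ∀ j : Fin n, g j k * T j i =
        (if j = i then g i k else 0) +
        (if j ∈ Iio i then (⟪g j, a i⟫ / ((‖g j‖ : ℂ) ^ 2)) * g j k else 0) := by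
      intro j
      rw [hT]
      simp only [Matrix.of_apply, Finset.mem_Iio]
      rcases eq_or_ne j i with rfl | hne
      · simp [lt_irrefl]
      · simp only [hne, if_false]
        rcases lt_or_ge j i with h | h
        · simp [h, mul_comm]
        · simp [not_lt.mpr h]
    calc A k i = g i k + ∑ j ∈ Iio i, (⟪g j, a i⟫ / ((‖g j‖ : ℂ) ^ 2)) * g j k := this
    _ = ∑ j : Fin n, g j k * T j i := by
        rw [Finset.sum_congr rfl fun j _ => hsplit j, Finset.sum_add_distrib,
          Finset.sum_ite_eq' Finset.univ i (fun _ => g i k), Finset.sum_ite_mem,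
          Finset.univ_inter]
        simp
    _ = ∑ j : Fin n, G k j * T j i := rfl
  have hTdet : T.det = 1 := by
    have htri : T.BlockTriangular id := by
      intro i j h
      simp only [id_eq] at h
      rw [hT]
      simp only [Matrix.of_apply]
      rw [if_neg (by exact fun e => absurd e (by rintro rfl; exact lt_irrefl _ h)),
        if_neg (not_lt.mpr h.le)]
    rw [Matrix.det_of_upperTriangular htri]
    simp [hT]
  have hdetAG : A.det = G.det := by rw [hAGT, Matrix.det_mul, hTdet, mul_one]
  have hGHG : Gᴴ * G = Matrix.diagonal fun i => ((‖g i‖ : ℂ) ^ 2) := by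
    ext i j
    rw [Matrix.mul_apply]
    simp only [Matrix.conjTranspose_apply, hG, Matrix.of_apply]
    rcases eq_or_ne i j with rfl | hne
    · rw [Matrix.diagonal_apply_eq]
      calc ∑ k, star (g i k) * g i k = ⟪g i, g i⟫ := by
            rw [PiLp.inner_apply]; simp [RCLike.inner_apply, RCLike.star_def, Complex.conj_mul']
        _ = ((‖g i‖ : ℂ) ^ 2) := inner_self_eq_norm_sq_to_K (g i)
    · rw [Matrix.diagonal_apply_ne _ hne]
      have := gramSchmidt_orthogonal ℂ a hne
      rw [PiLp.inner_apply] at this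
      simp only [RCLike.inner_apply, RCLike.star_def] at this
      rw [← this]
      exact Finset.sum_congr rfl fun k _ => by simp [hgdef, mul_comm]
  have hnormsq : ‖G.det‖ ^ 2 = ∏ i, ‖g i‖ ^ 2 := by
    have h1 : (starRingEnd ℂ) G.det * G.det = ∏ i, ((‖g i‖ : ℂ) ^ 2) := by
      have h := congrArg Matrix.det hGHG
      rw [Matrix.det_mul, Matrix.det_conjTranspose, Matrix.det_diagonal] at h
      rw [← h, Complex.star_def]
    have h2 : (starRingEnd ℂ) G.det * G.det = ((‖G.det‖ ^ 2 : ℝ) : ℂ) := by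
      rw [← Complex.normSq_eq_conj_mul_self, Complex.normSq_eq_norm_sq]
    rw [h2] at h1
    have h3 : ((∏ i, ‖g i‖ ^ 2 : ℝ) : ℂ) = ∏ i, ((‖g i‖ : ℂ) ^ 2) := by push_cast; ring
    rw [← h3] at h1
    exact_mod_cast h1
  have hfin : ‖A.det‖ ^ 2 ≤ (∏ i, ‖a i‖) ^ 2 := by
    rw [hdetAG, hnormsq, ← Finset.prod_pow]
    exact Finset.prod_le_prod (fun i _ => sq_nonneg _)
      (fun i _ => pow_le_pow_left₀ (norm_nonneg _) (norm_gramSchmidt_le a i) 2)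
  exact (pow_le_pow_iff_left₀ (norm_nonneg _) (Finset.prod_nonneg fun i _ => norm_nonneg _)
    two_ne_zero).mp hfin

/-- The pure tensor attached to a permutation. -/
def permTensor (n : ℕ) (σ : Equiv.Perm (Fin n)) : TensorSpace (fun _ : Fin n => Fin n) :=
  WithLp.toLp 2 (fun f => if f = ⇑σ then ((Equiv.Perm.sign σ : ℤ) : ℂ) else 0)

lemma sign_norm (σ : Equiv.Perm (Fin n)) : ‖((Equiv.Perm.sign σ : ℤ) : ℂ)‖ = 1 := by
  rcases Int.units_eq_one_or (Equiv.Perm.sign σ) with h | h <;> simp [h]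

lemma permTensor_isPure (σ : Equiv.Perm (Fin n)) : IsPure (permTensor n σ) := by
  rcases Nat.eq_zero_or_pos n with rfl | hpos
  · refine ⟨fun _ _ => 1, fun i => ?_⟩
    have h1 : i = ⇑σ := funext fun e => e.elim0
    have h2 : σ = Equiv.refl (Fin 0) := Equiv.ext fun x => x.elim0
    simp [permTensor, h1, h2]
  · set e₀ : Fin n := ⟨0, hpos⟩
    refine ⟨fun e j => (if e = e₀ then ((Equiv.Perm.sign σ : ℤ) : ℂ) else 1) *
      (if j = σ e then 1 else 0), fun i => ?_⟩
    rw [Finset.prod_mul_distrib, Finset.prod_ite_eq' Finset.univ e₀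
      (fun _ => ((Equiv.Perm.sign σ : ℤ) : ℂ)), Finset.prod_boole]
    simp only [Finset.mem_univ, if_true]
    rw [permTensor, PiLp.toLp_apply]
    split_ifs with h1 h2 h2
    · rw [mul_one]
    · exact absurd (fun e _ => congrFun h1 e) h2
    · exact (h1 (funext fun e => h2 e trivial)).elim
    · rw [mul_zero]

lemma permTensor_norm (σ : Equiv.Perm (Fin n)) : ‖permTensor n σ‖ = 1 := by
  rw [EuclideanSpace.norm_eq]
  have hsn := sign_norm σ
  have hterm : ∀ f : Fin n → Fin n, ‖permTensor n σ f‖ ^ 2 = if f = ⇑σ then 1 else 0 := by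
    intro f
    by_cases h : f = ⇑σ
    · rw [permTensor, PiLp.toLp_apply, if_pos h, if_pos h, hsn, one_pow]
    · rw [permTensor, PiLp.toLp_apply, if_neg h, if_neg h, norm_zero]; norm_num
  rw [Finset.sum_congr rfl fun f _ => hterm f,
    Finset.sum_ite_eq' Finset.univ (⇑σ) fun _ => (1:ℝ)]
  simp

lemma sum_permTensor : ∑ σ : Equiv.Perm (Fin n), permTensor n σ = detTensor n := by
  ext f
  rw [WithLp.ofLp_sum, Finset.sum_apply]
  by_cases hb : Function.Bijective f
  · rw [detTensor, PiLp.toLp_apply, dif_pos hb]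
    rw [Finset.sum_eq_single (Equiv.ofBijective f hb)]
    · have hcoe : f = ⇑(Equiv.ofBijective f hb) := rfl
      rw [permTensor, PiLp.toLp_apply, if_pos hcoe]
    · intro σ _ hσ
      rw [permTensor, PiLp.toLp_apply, if_neg]
      intro hf
      exact hσ (Equiv.coe_fn_injective hf.symm)
    · intro h
      exact absurd (Finset.mem_univ _) h
  · rw [detTensor, PiLp.toLp_apply, dif_neg hb]
    refine Finset.sum_eq_zero fun σ _ => ?_
    rw [permTensor, PiLp.toLp_apply, if_neg fun hf => hb (by rw [hf]; exact σ.bijective)]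

lemma detTensor_norm_sq : ‖detTensor n‖ ^ 2 = (n.factorial : ℝ) := by
  classical
  rw [EuclideanSpace.norm_eq, Real.sq_sqrt (Finset.sum_nonneg fun _ _ => sq_nonneg _)]
  have hterm : ∀ f : Fin n → Fin n, ‖detTensor n f‖ ^ 2 =
      if Function.Bijective f then 1 else 0 := by
    intro f
    by_cases h : Function.Bijective f
    · rw [detTensor, PiLp.toLp_apply, dif_pos h, if_pos h, sign_norm, one_pow]
    · rw [detTensor, PiLp.toLp_apply, dif_neg h, if_neg h, norm_zero]; norm_num
  rw [Finset.sum_congr rfl fun f _ => hterm f, Finset.sum_boole]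
  have e : Equiv.Perm (Fin n) ≃ {f : Fin n → Fin n // Function.Bijective f} :=
    ⟨fun σ => ⟨σ, σ.bijective⟩, fun f => Equiv.ofBijective f.1 f.2,
      fun σ => Equiv.ext fun x => rfl, fun f => Subtype.ext rfl⟩
  have hcard : (Finset.univ.filter fun f : Fin n → Fin n => Function.Bijective f).card
      = n.factorial := by
    rw [← Fintype.card_subtype, ← Fintype.card_congr e, Fintype.card_perm, Fintype.card_fin]
  rw [hcard]

lemma inner_permTensor_pure (σ : Equiv.Perm (Fin n)) (v : TensorSpace (fun _ : Fin n => Fin n)) :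
    ⟪permTensor n σ, v⟫ = ((Equiv.Perm.sign σ : ℤ) : ℂ) * v ⇑σ := by
  rw [PiLp.inner_apply]
  have hterm : ∀ f : Fin n → Fin n, (inner ℂ (permTensor n σ f) (v f) : ℂ) =
      if f = ⇑σ then ((Equiv.Perm.sign σ : ℤ) : ℂ) * v f else 0 := by
    intro f
    by_cases h : f = ⇑σ
    · rw [if_pos h, RCLike.inner_apply]; simp only [permTensor, PiLp.toLp_apply]; rw [if_pos h, map_intCast, mul_comm]
    · rw [if_neg h, RCLike.inner_apply]; simp only [permTensor, PiLp.toLp_apply]; rw [if_neg h, map_zero, mul_zero]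
  rw [Finset.sum_congr rfl fun f _ => hterm f,
    Finset.sum_ite_eq' Finset.univ (⇑σ) (fun f => ((Equiv.Perm.sign σ : ℤ) : ℂ) * v f)]
  simp

lemma inner_detTensor_pure (a : Fin n → EuclideanSpace ℂ (Fin n))
    (v : TensorSpace (fun _ : Fin n => Fin n)) (hv : ∀ f, v f = ∏ e, a e (f e)) :
    ⟪detTensor n, v⟫ = (Matrix.of fun k i => a i k).det := by
  rw [← sum_permTensor, sum_inner, Matrix.det_apply]
  refine Finset.sum_congr rfl fun σ _ => ?_
  rw [inner_permTensor_pure, hv]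
  simp only [Matrix.of_apply]
  rw [Units.smul_def, zsmul_eq_mul]

lemma pure_norm (a : Fin n → EuclideanSpace ℂ (Fin n))
    (v : TensorSpace (fun _ : Fin n => Fin n)) (hv : ∀ f, v f = ∏ e, a e (f e)) :
    ‖v‖ = ∏ e, ‖a e‖ := by
  have h1 : (0:ℝ) ≤ ∏ e, ‖a e‖ := Finset.prod_nonneg fun e _ => norm_nonneg _
  have hsq : ‖v‖ ^ 2 = (∏ e, ‖a e‖) ^ 2 := by
    rw [EuclideanSpace.norm_eq, Real.sq_sqrt (Finset.sum_nonneg fun _ _ => sq_nonneg _),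
      ← Finset.prod_pow]
    have he : ∀ e : Fin n, ‖a e‖ ^ 2 = ∑ j, ‖a e j‖ ^ 2 := by
      intro e
      rw [EuclideanSpace.norm_eq, Real.sq_sqrt (Finset.sum_nonneg fun _ _ => sq_nonneg _)]
    rw [Finset.prod_congr rfl fun e _ => he e, Finset.prod_univ_sum,
      Fintype.piFinset_univ]
    exact Finset.sum_congr rfl fun f _ => by rw [hv f, norm_prod, Finset.prod_pow]
  calc ‖v‖ = Real.sqrt (‖v‖ ^ 2) := (Real.sqrt_sq (norm_nonneg v)).symm
    _ = Real.sqrt ((∏ e, ‖a e‖) ^ 2) := by rw [hsq]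
    _ = ∏ e, ‖a e‖ := Real.sqrt_sq h1

lemma inner_detTensor_le (v : TensorSpace (fun _ : Fin n => Fin n)) (hv : IsPure v) :
    ‖(⟪detTensor n, v⟫ : ℂ)‖ ≤ ‖v‖ := by
  obtain ⟨a, ha⟩ := hv
  set a' : Fin n → EuclideanSpace ℂ (Fin n) := fun e => WithLp.toLp 2 (a e)
  have ha' : ∀ f, v f = ∏ e, a' e (f e) := ha
  rw [inner_detTensor_pure a' v ha', pure_norm a' v ha']
  exact hadamard a'

end DetNuclear

open DetNuclear

/-- **Theorem 1.15.** `‖det_n‖⋆ = n!`. -/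
theorem detTensor_nuclearNorm (n : ℕ) :
    nuclearNorm (detTensor n) = (n.factorial : ℝ) := by
  classical
  have hmem : (n.factorial : ℝ) ∈ {c : ℝ | ∃ (r : ℕ)
      (v : Fin r → TensorSpace (fun _ : Fin n => Fin n)),
      (∀ i, IsPure (v i)) ∧ detTensor n = ∑ i, v i ∧ c = ∑ i, ‖v i‖} := by
    refine ⟨n.factorial, fun i => permTensor n
      ((Fintype.equivFinOfCardEq (by rw [Fintype.card_perm, Fintype.card_fin])).symm i),
      fun i => permTensor_isPure _, ?_, ?_⟩
    · rw [← sum_permTensor]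
      exact (Equiv.sum_comp (Fintype.equivFinOfCardEq
        (by rw [Fintype.card_perm, Fintype.card_fin])).symm (permTensor n)).symm
    · rw [Finset.sum_congr rfl fun i _ => permTensor_norm _]
      simp
  have hbdd : BddBelow {c : ℝ | ∃ (r : ℕ)
      (v : Fin r → TensorSpace (fun _ : Fin n => Fin n)),
      (∀ i, IsPure (v i)) ∧ detTensor n = ∑ i, v i ∧ c = ∑ i, ‖v i‖} := by
    refine ⟨0, fun c hc => ?_⟩
    obtain ⟨r, v, _, _, hc⟩ := hc
    rw [hc]
    exact Finset.sum_nonneg fun i _ => norm_nonneg _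
  have hlow : ∀ c ∈ {c : ℝ | ∃ (r : ℕ)
      (v : Fin r → TensorSpace (fun _ : Fin n => Fin n)),
      (∀ i, IsPure (v i)) ∧ detTensor n = ∑ i, v i ∧ c = ∑ i, ‖v i‖},
      (n.factorial : ℝ) ≤ c := by
    intro c hc
    obtain ⟨r, v, hpure, hsum, hc⟩ := hc
    have hexp : (inner ℂ (detTensor n) (detTensor n) : ℂ) =
        ∑ i, (inner ℂ (detTensor n) (v i) : ℂ) := by
      nth_rewrite 2 [hsum]
      exact inner_sum _ _ _
    have key : (n.factorial : ℝ) = RCLike.re (inner ℂ (detTensor n) (detTensor n) : ℂ) := by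
      rw [inner_self_eq_norm_sq, detTensor_norm_sq]
    rw [key, hexp, map_sum, hc]
    refine Finset.sum_le_sum fun i _ => ?_
    calc RCLike.re (inner ℂ (detTensor n) (v i) : ℂ) ≤ ‖(inner ℂ (detTensor n) (v i) : ℂ)‖ :=
          RCLike.re_le_norm _
      _ ≤ ‖v i‖ := inner_detTensor_le (v i) (hpure i)
  exact le_antisymm (csInf_le hbdd hmem) (le_csInf ⟨_, hmem⟩ hlow)
end
end

section
/- Let V = V^(1) ⊗ ⋯ ⊗ V^(d) be a tensor product of finite-dimensional complex Hilbert spaces. Let w = (w_1,…,w_s) and v = (v_1,…,v_r) consist of pure tensors of unit norm, let λ_1 ≥ ⋯ ≥ λ_s > 0 and σ_1 ≥ ⋯ ≥ σ_r > 0 satisfy ∑_{i=1}^s λ_i w_i = ∑_{j=1}^r σ_j v_j. Suppose k ≤ s and l ≤ r are such that δ := k·[v]_1 − l·[w^[k]]_1 satisfies 0 ≤ δ ≤ [w^[k]]_1, where w^[k] = (w_1,…,w_k). Then [w^[k]]_1 · (σ_1 + σ_2 + ⋯ + σ_l) + δ·σ_{l+1} ≥ (1 − μ_1(w)) · (λ_1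 + λ_2 + ⋯ + λ_k), where by convention σ_j = 0 for j > r. -/
noncomputable section

open Finset

variable {d : ℕ} {ι : Fin d → Type*} [∀ e, Fintype (ι e)]

set_option maxHeartbeats 2000000 in
/-- **Theorem 6.1 (main theorem).** Suppose `∑ᵢ λᵢ wᵢ = ∑ⱼ σⱼ vⱼ` with all `wᵢ, vⱼ` pure
tensors of unit length, `λ₁ ≥ ⋯ ≥ λ_s > 0`, `σ₁ ≥ ⋯ ≥ σ_r > 0`.  If `k ≤ s`, `l ≤ r` and
`δ := k·[v]₁ − l·[w^[k]]₁` satisfies `0 ≤ δ ≤ [w^[k]]₁`, then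
`[w^[k]]₁(σ₁ + ⋯ + σ_l) + δ σ_{l+1} ≥ (1 − μ₁(w))(λ₁ + ⋯ + λ_k)`,
with the convention `σ_j = 0` for `j > r`. -/
theorem main_singular_value_inequality {d s r : ℕ} {ι : Fin d → Type*} [∀ e, Fintype (ι e)]
    (w : Fin s → TensorSpace ι) (v : Fin r → TensorSpace ι)
    (lam : Fin s → ℝ) (sig : Fin r → ℝ)
    (hwpure : ∀ i, IsPure (w i)) (hwunit : ∀ i, ‖w i‖ = 1)
    (hvpure : ∀ j, IsPure (v j)) (hvunit : ∀ j, ‖v j‖ = 1)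
    (hlam_mono : ∀ i i' : Fin s, i ≤ i' → lam i' ≤ lam i) (hlam_pos : ∀ i, 0 < lam i)
    (hsig_mono : ∀ j j' : Fin r, j ≤ j' → sig j' ≤ sig j) (hsig_pos : ∀ j, 0 < sig j)
    (heq : ∑ i, (lam i : ℂ) • w i = ∑ j, (sig j : ℂ) • v j)
    (k l : ℕ) (hk : k ≤ s) (hl : l ≤ r)
    (δ : ℝ)
    (hδ : δ = k * bracket v 1 - l * bracket (fun i : Fin k => w (Fin.castLE hk i)) 1)
    (hδ0 : 0 ≤ δ) (hδ1 : δ ≤ bracket (fun i : Fin k => w (Fin.castLE hk i)) 1) :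
    (1 - mu w 1) * (∑ i : Fin k, lam (Fin.castLE hk i)) ≤
      bracket (fun i : Fin k => w (Fin.castLE hk i)) 1 *
          (∑ j ∈ Finset.range l, if hj : j < r then sig ⟨j, hj⟩ else 0) +
        δ * (if hl' : l < r then sig ⟨l, hl'⟩ else 0) := by
  classical
  set B := bracket (fun i : Fin k => w (Fin.castLE hk i)) 1 with hBdef
  set V := bracket v 1 with hVdef
  set T : TensorSpace ι := ∑ i, (lam i : ℂ) • w i with hT
  set K : Finset (Fin s) := Finset.univ.filter (fun i => (i : ℕ) < k) with hK
  have hKmap : K = Finset.univ.map ⟨Fin.castLE hk, Fin.castLE_injective hk⟩ := by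
    ext j
    simp only [hK, Finset.mem_filter, Finset.mem_univ, true_and, Finset.mem_map,
      Function.Embedding.coeFn_mk]
    constructor
    · intro h; exact ⟨⟨j, h⟩, Fin.ext rfl⟩
    · rintro ⟨a, rfl⟩; exact a.isLt
  have hKcard : K.card = k := by rw [hKmap]; simp
  have hsumK : ∀ f : Fin s → ℝ, ∑ i : Fin k, f (Fin.castLE hk i) = ∑ i ∈ K, f i := by
    intro f; rw [hKmap, Finset.sum_map]; rfl
  have h11 : (1:ℝ)/1 = 1 := by norm_num
  have hcs : ∀ x y : TensorSpace ι, ‖x‖ = 1 → ‖y‖ = 1 → ‖(inner ℂ x y : ℂ)‖ ≤ 1 := by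
    intro x y hx hy
    have := norm_inner_le_norm (𝕜 := ℂ) x y
    rw [hx, hy] at this; simpa using this
  -- coherence bound for each row
  have hrowle : ∀ i : Fin s, (∑ j ∈ Finset.univ.erase i, ‖(inner ℂ (w i) (w j) : ℂ)‖) ≤ mu w 1 := by
    intro i
    apply le_csSup
    · refine ⟨s, ?_⟩
      rintro c ⟨i0, rfl⟩
      rw [h11, Real.rpow_one]
      calc (∑ j ∈ Finset.univ.erase i0, ‖(inner ℂ (w i0) (w j) : ℂ)‖ ^ (1:ℝ))
          = ∑ j ∈ Finset.univ.erase i0, ‖(inner ℂ (w i0) (w j) : ℂ)‖ :=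
            Finset.sum_congr rfl fun j _ => Real.rpow_one _
        _ ≤ ∑ j ∈ Finset.univ.erase i0, 1 :=
            Finset.sum_le_sum fun j _ => hcs _ _ (hwunit _) (hwunit _)
        _ ≤ (s:ℝ) := by
            simp only [Finset.sum_const, nsmul_eq_mul, mul_one]
            exact_mod_cast (Finset.card_le_card (Finset.subset_univ _)).trans (by simp)
    · refine ⟨i, ?_⟩
      rw [h11, Real.rpow_one]
      exact Finset.sum_congr rfl fun j _ => (Real.rpow_one _).symm
  -- column sums against v are bounded by B
  have hcB : ∀ j : Fin r, (∑ i ∈ K, ‖(inner ℂ (v j) (w i) : ℂ)‖) ≤ B := by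
    intro j
    rw [hBdef, bracket]
    apply le_csSup
    · refine ⟨k, ?_⟩
      rintro c ⟨u, hpure, hu, rfl⟩
      rw [h11, Real.rpow_one]
      calc (∑ i : Fin k, ‖(inner ℂ (w (Fin.castLE hk i)) u : ℂ)‖ ^ (1:ℝ))
          = ∑ i : Fin k, ‖(inner ℂ (w (Fin.castLE hk i)) u : ℂ)‖ :=
            Finset.sum_congr rfl fun i _ => Real.rpow_one _
        _ ≤ ∑ i : Fin k, 1 := Finset.sum_le_sum fun i _ => hcs _ _ (hwunit _) hu
        _ ≤ (k:ℝ) := by simp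
    · refine ⟨v j, hvpure j, hvunit j, ?_⟩
      rw [h11, Real.rpow_one]
      rw [← hsumK fun i => ‖(inner ℂ (v j) (w i) : ℂ)‖]
      exact Finset.sum_congr rfl fun i _ => by
        rw [Real.rpow_one, norm_inner_symm]
  -- row sums against v are bounded by V
  have hvV : ∀ i : Fin s, (∑ j : Fin r, ‖(inner ℂ (v j) (w i) : ℂ)‖) ≤ V := by
    intro i
    rw [hVdef, bracket]
    apply le_csSup
    · refine ⟨r, ?_⟩
      rintro c ⟨u, hpure, hu, rfl⟩
      rw [h11, Real.rpow_one]
      calc (∑ j : Fin r, ‖(inner ℂ (v j) u : ℂ)‖ ^ (1:ℝ))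
          = ∑ j : Fin r, ‖(inner ℂ (v j) u : ℂ)‖ :=
            Finset.sum_congr rfl fun j _ => Real.rpow_one _
        _ ≤ ∑ j : Fin r, 1 := Finset.sum_le_sum fun j _ => hcs _ _ (hvunit _) hu
        _ ≤ (r:ℝ) := by simp
    · refine ⟨w i, hwpure i, hwunit i, ?_⟩
      rw [h11, Real.rpow_one]
      exact Finset.sum_congr rfl fun j _ => (Real.rpow_one _).symm
  -- inner products of T
  have hTw : ∀ i : Fin s, (inner ℂ T (w i) : ℂ) = ∑ i', (lam i' : ℂ) * inner ℂ (w i') (w i) := by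
    intro i
    rw [hT, sum_inner]
    exact Finset.sum_congr rfl fun i' _ => by rw [inner_smul_left, Complex.conj_ofReal]
  have hTv : ∀ i : Fin s, (inner ℂ T (w i) : ℂ) = ∑ j, (sig j : ℂ) * inner ℂ (v j) (w i) := by
    intro i
    rw [heq, sum_inner]
    exact Finset.sum_congr rfl fun j _ => by rw [inner_smul_left, Complex.conj_ofReal]
  -- lower bound on each |⟨T, w i⟩|
  have h1 : ∀ i ∈ K, lam i - (∑ i' ∈ Finset.univ.erase i, lam i' * ‖(inner ℂ (w i') (w i) : ℂ)‖)
      ≤ ‖(inner ℂ T (w i) : ℂ)‖ := by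
    intro i _
    have hsplit : (inner ℂ T (w i) : ℂ) =
        (lam i : ℂ) * inner ℂ (w i) (w i)
          + ∑ i' ∈ Finset.univ.erase i, (lam i' : ℂ) * inner ℂ (w i') (w i) := by
      rw [hTw i, ← Finset.add_sum_erase _ _ (Finset.mem_univ i)]
    have hself : (inner ℂ (w i) (w i) : ℂ) = 1 := by
      rw [inner_self_eq_norm_sq_to_K, hwunit i]; norm_num
    have hnorm1 : ‖(lam i : ℂ) * inner ℂ (w i) (w i)‖ = lam i := by
      rw [hself, mul_one, Complex.norm_real, Real.norm_eq_abs, abs_of_pos (hlam_pos i)]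
    have htri : ‖(lam i : ℂ) * inner ℂ (w i) (w i)‖ ≤ ‖(inner ℂ T (w i) : ℂ)‖
        + ‖∑ i' ∈ Finset.univ.erase i, (lam i' : ℂ) * inner ℂ (w i') (w i)‖ := by
      rw [hsplit]
      exact norm_le_add_norm_add _ _
    have hrest : ‖∑ i' ∈ Finset.univ.erase i, (lam i' : ℂ) * inner ℂ (w i') (w i)‖
        ≤ ∑ i' ∈ Finset.univ.erase i, lam i' * ‖(inner ℂ (w i') (w i) : ℂ)‖ := by
      refine (norm_sum_le _ _).trans (Finset.sum_le_sum fun i' _ => ?_)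
      rw [norm_mul, Complex.norm_real, Real.norm_eq_abs, abs_of_pos (hlam_pos i')]
    rw [← hnorm1]
    linarith
  -- cross-term bound
  have hcross : (∑ i ∈ K, ∑ i' ∈ Finset.univ.erase i, lam i' * ‖(inner ℂ (w i') (w i) : ℂ)‖)
      ≤ mu w 1 * ∑ i ∈ K, lam i := by
    have hsplit : ∀ i : Fin s,
        (∑ i' ∈ Finset.univ.erase i, lam i' * ‖(inner ℂ (w i') (w i) : ℂ)‖)
          = (∑ i' ∈ (Finset.univ.erase i).filter (· ∈ K), lam i' * ‖(inner ℂ (w i') (w i) : ℂ)‖)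
          + ∑ i' ∈ (Finset.univ.erase i).filter (· ∉ K), lam i' * ‖(inner ℂ (w i') (w i) : ℂ)‖ :=
      fun i => (Finset.sum_filter_add_sum_filter_not _ _ _).symm
    have hKe : ∀ i, (Finset.univ.erase i).filter (· ∈ K) = K.erase i := by
      intro i; ext a; simp [Finset.mem_erase, Finset.mem_filter, and_comm]
    have hA : (∑ i ∈ K, ∑ i' ∈ K.erase i, lam i' * ‖(inner ℂ (w i') (w i) : ℂ)‖)
        = ∑ i ∈ K, lam i * ∑ i' ∈ K.erase i, ‖(inner ℂ (w i) (w i') : ℂ)‖ := by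
      have e1 : (∑ i ∈ K, ∑ i' ∈ K.erase i, lam i' * ‖(inner ℂ (w i') (w i) : ℂ)‖)
          = ∑ i ∈ K, ∑ i' ∈ K, if i' ≠ i then lam i' * ‖(inner ℂ (w i') (w i) : ℂ)‖ else 0 := by
        refine Finset.sum_congr rfl fun i _ => ?_
        rw [← Finset.sum_filter]
        refine Finset.sum_congr ?_ fun _ _ => rfl
        ext a; simp [Finset.mem_erase, Finset.mem_filter, and_comm]
      rw [e1, Finset.sum_comm]
      refine Finset.sum_congr rfl fun b _ => ?_
      have he : K.erase b = K.filter (fun a => b ≠ a) := by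
        ext a; simp [Finset.mem_erase, Finset.mem_filter, and_comm, ne_comm]
      rw [Finset.mul_sum]
      conv_rhs => rw [he, Finset.sum_filter]
    have hstep : ∀ i ∈ K,
        (∑ i' ∈ (Finset.univ.erase i).filter (· ∉ K), lam i' * ‖(inner ℂ (w i') (w i) : ℂ)‖)
          ≤ lam i * ∑ i' ∈ (Finset.univ.erase i).filter (· ∉ K), ‖(inner ℂ (w i) (w i') : ℂ)‖ := by
      intro i hi
      rw [Finset.mul_sum]
      refine Finset.sum_le_sum fun i' hi' => ?_
      have h1' : i' ∉ K := (Finset.mem_filter.mp hi').2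
      have hle : i ≤ i' := by
        have h2' : (i : ℕ) < k := by simpa [hK] using hi
        have h3' : ¬ (i' : ℕ) < k := by simpa [hK] using h1'
        have : (i : ℕ) ≤ (i' : ℕ) := by omega
        exact Fin.le_def.mpr this
      have hsym : ‖(inner ℂ (w i') (w i) : ℂ)‖ = ‖(inner ℂ (w i) (w i') : ℂ)‖ :=
        norm_inner_symm _ _
      rw [hsym]
      exact mul_le_mul_of_nonneg_right (hlam_mono i i' hle) (norm_nonneg _)
    calc (∑ i ∈ K, ∑ i' ∈ Finset.univ.erase i, lam i' * ‖(inner ℂ (w i') (w i) : ℂ)‖)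
        = (∑ i ∈ K, ∑ i' ∈ K.erase i, lam i' * ‖(inner ℂ (w i') (w i) : ℂ)‖)
          + ∑ i ∈ K, ∑ i' ∈ (Finset.univ.erase i).filter (· ∉ K),
              lam i' * ‖(inner ℂ (w i') (w i) : ℂ)‖ := by
          rw [← Finset.sum_add_distrib]
          refine Finset.sum_congr rfl fun i _ => ?_
          rw [← hKe i]
          exact (Finset.sum_filter_add_sum_filter_not _ _ _).symm
      _ ≤ (∑ i ∈ K, lam i * ∑ i' ∈ K.erase i, ‖(inner ℂ (w i) (w i') : ℂ)‖)
          + ∑ i ∈ K, lam i * ∑ i' ∈ (Finset.univ.erase i).filter (· ∉ K),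
              ‖(inner ℂ (w i) (w i') : ℂ)‖ := by
          rw [hA]
          exact add_le_add le_rfl (Finset.sum_le_sum hstep)
      _ = ∑ i ∈ K, lam i * ∑ i' ∈ Finset.univ.erase i, ‖(inner ℂ (w i) (w i') : ℂ)‖ := by
          rw [← Finset.sum_add_distrib]
          refine Finset.sum_congr rfl fun i _ => ?_
          rw [← mul_add, ← hKe i, Finset.sum_filter_add_sum_filter_not]
      _ ≤ ∑ i ∈ K, lam i * mu w 1 :=
          Finset.sum_le_sum fun i _ =>
            mul_le_mul_of_nonneg_left (hrowle i) (hlam_pos i).le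
      _ = mu w 1 * ∑ i ∈ K, lam i := by rw [← Finset.sum_mul]; ring
  -- lower bound assembled
  have h2 : (1 - mu w 1) * (∑ i ∈ K, lam i) ≤ ∑ i ∈ K, ‖(inner ℂ T (w i) : ℂ)‖ := by
    have e : (1 - mu w 1) * (∑ i ∈ K, lam i)
        = (∑ i ∈ K, lam i) - mu w 1 * ∑ i ∈ K, lam i := by ring
    rw [e]
    calc (∑ i ∈ K, lam i) - mu w 1 * ∑ i ∈ K, lam i
        ≤ (∑ i ∈ K, lam i)
          - ∑ i ∈ K, ∑ i' ∈ Finset.univ.erase i, lam i' * ‖(inner ℂ (w i') (w i) : ℂ)‖ := by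
          linarith [hcross]
      _ = ∑ i ∈ K, (lam i - ∑ i' ∈ Finset.univ.erase i, lam i' * ‖(inner ℂ (w i') (w i) : ℂ)‖) := by
          rw [Finset.sum_sub_distrib]
      _ ≤ ∑ i ∈ K, ‖(inner ℂ T (w i) : ℂ)‖ := Finset.sum_le_sum h1
  -- upper bound via v
  set c : Fin r → ℝ := fun j => ∑ i ∈ K, ‖(inner ℂ (v j) (w i) : ℂ)‖ with hc
  have hc0 : ∀ j, 0 ≤ c j := fun j => Finset.sum_nonneg fun _ _ => norm_nonneg _
  have h3 : (∑ i ∈ K, ‖(inner ℂ T (w i) : ℂ)‖) ≤ ∑ j : Fin r, sig j * c j := by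
    calc (∑ i ∈ K, ‖(inner ℂ T (w i) : ℂ)‖)
        ≤ ∑ i ∈ K, ∑ j : Fin r, sig j * ‖(inner ℂ (v j) (w i) : ℂ)‖ := by
          refine Finset.sum_le_sum fun i _ => ?_
          rw [hTv i]
          refine (norm_sum_le _ _).trans (le_of_eq (Finset.sum_congr rfl fun j _ => ?_))
          rw [norm_mul, Complex.norm_real, Real.norm_eq_abs, abs_of_pos (hsig_pos j)]
      _ = ∑ j : Fin r, sig j * c j := by
          rw [Finset.sum_comm]
          exact Finset.sum_congr rfl fun j _ => by rw [hc, ← Finset.mul_sum]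
  have hCall : (∑ j : Fin r, c j) ≤ (k : ℝ) * V := by
    calc (∑ j : Fin r, c j) = ∑ i ∈ K, ∑ j : Fin r, ‖(inner ℂ (v j) (w i) : ℂ)‖ := by
          rw [Finset.sum_comm]
      _ ≤ ∑ i ∈ K, V := Finset.sum_le_sum fun i _ => hvV i
      _ = (k : ℝ) * V := by rw [Finset.sum_const, hKcard, nsmul_eq_mul]
  have hkV : (∑ j : Fin r, c j) ≤ (l : ℝ) * B + δ := by
    have hkV' : (k : ℝ) * V = (l : ℝ) * B + δ := by rw [hδ]; ring
    linarith [hCall]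
  -- the truncated sigma sum
  set L : Finset (Fin r) := Finset.univ.filter (fun j => (j : ℕ) < l) with hL
  have hLmap : L = Finset.univ.map ⟨Fin.castLE hl, Fin.castLE_injective hl⟩ := by
    ext j
    simp only [hL, Finset.mem_filter, Finset.mem_univ, true_and, Finset.mem_map,
      Function.Embedding.coeFn_mk]
    constructor
    · intro h; exact ⟨⟨j, h⟩, Fin.ext rfl⟩
    · rintro ⟨a, rfl⟩; exact a.isLt
  have hLcard : L.card = l := by rw [hLmap]; simp
  have hSl : (∑ j ∈ Finset.range l, if hj : j < r then sig ⟨j, hj⟩ else 0)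
      = ∑ j ∈ L, sig j := by
    rw [hLmap, Finset.sum_map]
    rw [← Fin.sum_univ_eq_sum_range (fun m => if hj : m < r then sig ⟨m, hj⟩ else 0) l]
    refine Finset.sum_congr rfl fun j _ => ?_
    have hjr : (j : ℕ) < r := lt_of_lt_of_le j.isLt hl
    rw [dif_pos hjr]
    rfl
  have hcB' : ∀ j : Fin r, c j ≤ B := fun j => hcB j
  clear_value B V T K c L
  -- final rearrangement
  have hfinal : (∑ j : Fin r, sig j * c j)
      ≤ B * (∑ j ∈ L, sig j) + δ * (if hl' : l < r then sig ⟨l, hl'⟩ else 0) := by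
    by_cases hlr : l < r
    · rw [dif_pos hlr]
      set t : ℝ := sig ⟨l, hlr⟩ with htdef
      have ht0 : 0 ≤ t := (hsig_pos _).le
      clear_value t
      have hsplit : (∑ j : Fin r, sig j * c j)
          = (∑ j ∈ L, sig j * c j)
            + ∑ j ∈ Finset.univ.filter (fun j : Fin r => ¬ (j : ℕ) < l), sig j * c j := by
        rw [hL]
        exact (Finset.sum_filter_add_sum_filter_not _ _ _).symm
      have hCsplit : (∑ j ∈ L, c j)
          + (∑ j ∈ Finset.univ.filter (fun j : Fin r => ¬ (j : ℕ) < l), c j)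
          = ∑ j : Fin r, c j := by
        rw [hL]; exact Finset.sum_filter_add_sum_filter_not _ _ _
      have b1 : (∑ j ∈ L, sig j * c j)
          ≤ B * (∑ j ∈ L, sig j) + t * (∑ j ∈ L, c j) - t * ((l : ℝ) * B) := by
        calc (∑ j ∈ L, sig j * c j)
            ≤ ∑ j ∈ L, (sig j * B + (t * c j - t * B)) := by
              refine Finset.sum_le_sum fun j hj => ?_
              have hjl : (j : ℕ) < l := by simpa [hL] using hj
              have htj : t ≤ sig j := by
                rw [htdef]
                refine hsig_mono j ⟨l, hlr⟩ (Fin.le_def.mpr ?_)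
                simpa using hjl.le
              have hcj : c j ≤ B := hcB' j
              nlinarith
          _ = B * (∑ j ∈ L, sig j) + t * (∑ j ∈ L, c j) - t * ((l : ℝ) * B) := by
              rw [Finset.sum_add_distrib, Finset.sum_sub_distrib, ← Finset.sum_mul,
                ← Finset.mul_sum, Finset.sum_const, hLcard, nsmul_eq_mul]
              ring
      have b2 : (∑ j ∈ Finset.univ.filter (fun j : Fin r => ¬ (j : ℕ) < l), sig j * c j)
          ≤ t * ∑ j ∈ Finset.univ.filter (fun j : Fin r => ¬ (j : ℕ) < l), c j := by
        rw [Finset.mul_sum]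
        refine Finset.sum_le_sum fun j hj => ?_
        have hjl : ¬ (j : ℕ) < l := by simpa using (Finset.mem_filter.mp hj).2
        have htj : sig j ≤ t := by
          rw [htdef]
          refine hsig_mono ⟨l, hlr⟩ j (Fin.le_def.mpr ?_)
          simpa using Nat.le_of_not_lt hjl
        exact mul_le_mul_of_nonneg_right htj (hc0 j)
      have key : t * (∑ j ∈ L, c j)
          + t * (∑ j ∈ Finset.univ.filter (fun j : Fin r => ¬ (j : ℕ) < l), c j)
          ≤ t * ((l : ℝ) * B) + t * δ := by
        nlinarith [hkV, hCsplit, ht0]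
      rw [hsplit]
      linarith [b1, b2, key]
    · rw [dif_neg hlr]
      have hlr' : l = r := le_antisymm hl (Nat.le_of_not_lt hlr)
      have hLuniv : L = Finset.univ := by
        ext j
        have hjr := j.isLt
        simp only [hL, Finset.mem_filter, Finset.mem_univ, true_and, iff_true]
        omega
      calc (∑ j : Fin r, sig j * c j) ≤ ∑ j : Fin r, sig j * B :=
            Finset.sum_le_sum fun j _ =>
              mul_le_mul_of_nonneg_left (hcB' j) (hsig_pos j).le
        _ = B * (∑ j ∈ L, sig j) + δ * 0 := by
            rw [hLuniv, ← Finset.sum_mul]; ring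
  -- put everything together
  rw [hsumK lam, hSl]
  calc (1 - mu w 1) * (∑ i ∈ K, lam i)
      ≤ ∑ i ∈ K, ‖(inner ℂ T (w i) : ℂ)‖ := h2
    _ ≤ ∑ j : Fin r, sig j * c j := h3
    _ ≤ B * (∑ j ∈ L, sig j) + δ * (if hl' : l < r then sig ⟨l, hl'⟩ else 0) := hfinal
end
end

section
/- Let V = (V, (V^(1),…,V^(d))) and W = (W, (W^(1),…,W^(e))) be tensor product spaces of finite-dimensional complex Hilbert spaces, let S = (S_1,…,S_r) be an r-tuple of tensors in V and T = (T_1,…,T_r) an r-tuple of tensors in W, and suppose α, β, γ > 0 satisfy 1/α + 1/β = 1/γ. Then [S ⊗ T]_γ ≤ [S]_α · [T]_β, where S ⊗ T = (S_1⊗T_1,…,S_r⊗T_r) is viewed in the horizontal tensor product space (V ⊗ W, (V^(1),…,V^(d),W^(1),…,W^(e))). -/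
noncomputable section

open Finset

variable {d : ℕ} {ι : Fin d → Type*} [∀ e, Fintype (ι e)]

/-- The horizontal tensor product space of `V = V⁽¹⁾ ⊗ ⋯ ⊗ V⁽ᵈ⁾` and
`W = W⁽¹⁾ ⊗ ⋯ ⊗ W⁽ᵉ⁾`, i.e. `V ⊗ W` with factors `(V⁽¹⁾, …, V⁽ᵈ⁾, W⁽¹⁾, …, W⁽ᵉ⁾)`. -/
abbrev HTensorSpace {d e : ℕ} (ι : Fin d → Type*) (κ : Fin e → Type*)
    [∀ i, Fintype (ι i)] [∀ j, Fintype (κ j)] : Type _ :=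
  EuclideanSpace ℂ ((∀ i, ι i) × (∀ j, κ j))

/-- The horizontal tensor product `x ⊗ y` of two tensors. -/
def hprod {d e : ℕ} {ι : Fin d → Type*} {κ : Fin e → Type*}
    [∀ i, Fintype (ι i)] [∀ j, Fintype (κ j)]
    (x : TensorSpace ι) (y : TensorSpace κ) : HTensorSpace ι κ :=
  WithLp.toLp 2 (fun p => x p.1 * y p.2)

/-- A pure tensor in the horizontal tensor product space `(V ⊗ W, (V⁽¹⁾, …, W⁽ᵉ⁾))`:
this is exactly a product of a pure tensor of `V` and a pure tensor of `W`. -/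
def IsPureH {d e : ℕ} {ι : Fin d → Type*} {κ : Fin e → Type*}
    [∀ i, Fintype (ι i)] [∀ j, Fintype (κ j)] (u : HTensorSpace ι κ) : Prop :=
  ∃ (x : TensorSpace ι) (y : TensorSpace κ), IsPure x ∧ IsPure y ∧ ∀ p, u p = x p.1 * y p.2

/-- `[S]_α` computed in the horizontal tensor product space. -/
def bracketH {d e : ℕ} {ι : Fin d → Type*} {κ : Fin e → Type*}
    [∀ i, Fintype (ι i)] [∀ j, Fintype (κ j)] {m : Type*} [Fintype m]
    (S : m → HTensorSpace ι κ) (α : ℝ) : ℝ :=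
  sSup {c : ℝ | ∃ u : HTensorSpace ι κ, IsPureH u ∧ ‖u‖ = 1 ∧
    c = (∑ i, ‖(inner ℂ (S i) u : ℂ)‖ ^ α) ^ (1 / α)}

section Aux

variable {d' : ℕ} {ι' : Fin d' → Type*} [∀ e, Fintype (ι' e)]

lemma inner_hprod {e' : ℕ} {κ' : Fin e' → Type*} [∀ j, Fintype (κ' j)]
    (a x : TensorSpace ι') (b y : TensorSpace κ') :
    (inner ℂ (hprod a b) (hprod x y) : ℂ) = (inner ℂ a x : ℂ) * (inner ℂ b y : ℂ) := by
  simp only [PiLp.inner_apply, RCLike.inner_apply, hprod, PiLp.toLp_apply]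
  rw [Fintype.sum_prod_type, Finset.sum_mul_sum]
  congr 1; ext p; congr 1; ext q
  simp [map_mul]; ring

lemma norm_hprod {e' : ℕ} {κ' : Fin e' → Type*} [∀ j, Fintype (κ' j)]
    (x : TensorSpace ι') (y : TensorSpace κ') :
    ‖hprod x y‖ = ‖x‖ * ‖y‖ := by
  simp only [EuclideanSpace.norm_eq, hprod, PiLp.toLp_apply]
  rw [← Real.sqrt_mul (by positivity)]
  congr 1
  rw [Finset.sum_mul_sum, Fintype.sum_prod_type]
  exact Finset.sum_congr rfl fun i _ => Finset.sum_congr rfl fun j _ => by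
    simp [norm_mul, mul_pow]

lemma norm_eq_one_of_pure_zero (hd : d' = 0) (x : TensorSpace ι') (hx : IsPure x) :
    ‖x‖ = 1 := by
  subst hd
  obtain ⟨v, hv⟩ := hx
  have h1 : ∀ i : ∀ e : Fin 0, ι' e, x i = 1 := by
    intro i; rw [hv i]; simp
  rw [EuclideanSpace.norm_eq]
  have : (Finset.univ : Finset (∀ e : Fin 0, ι' e)) = {fun e => e.elim0} := by
    apply Finset.eq_singleton_iff_unique_mem.mpr
    exact ⟨Finset.mem_univ _, fun i _ => funext fun e => e.elim0⟩
  rw [this, Finset.sum_singleton, h1]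
  simp

lemma IsPure.smul_norm_inv (x : TensorSpace ι') (hx : IsPure x) :
    IsPure (((‖x‖ : ℂ))⁻¹ • x) := by
  cases d' with
  | zero =>
    have h1 : ‖x‖ = 1 := norm_eq_one_of_pure_zero rfl x hx
    rw [h1]; simpa using hx
  | succ n =>
    obtain ⟨v, hv⟩ := hx
    refine ⟨Function.update v 0 (fun t => ((‖x‖ : ℂ))⁻¹ * v 0 t), fun i => ?_⟩
    have hsmul : (((‖x‖ : ℂ))⁻¹ • x) i = ((‖x‖ : ℂ))⁻¹ * x i := rfl
    rw [hsmul, hv i, Fin.prod_univ_succ, Fin.prod_univ_succ]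
    rw [Function.update_self]
    have : ∀ e : Fin n, Function.update v 0 (fun t => ((‖x‖ : ℂ))⁻¹ * v 0 t) e.succ
        = v e.succ := fun e => Function.update_of_ne (Fin.succ_ne_zero e) _ _
    rw [Finset.prod_congr rfl fun e _ => congrFun (this e) _]
    ring

lemma bracket_bddAbove {m : Type*} [Fintype m] (S : m → TensorSpace ι') {α : ℝ}
    (hα : 0 < α) :
    BddAbove {c : ℝ | ∃ u : TensorSpace ι', IsPure u ∧ ‖u‖ = 1 ∧
      c = (∑ i, ‖(inner ℂ (S i) u : ℂ)‖ ^ α) ^ (1 / α)} := by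
  refine ⟨(∑ i, ‖S i‖ ^ α) ^ (1 / α), ?_⟩
  rintro c ⟨u, -, hu, rfl⟩
  refine Real.rpow_le_rpow (Finset.sum_nonneg fun i _ => Real.rpow_nonneg (norm_nonneg _) _)
    (Finset.sum_le_sum fun i _ => ?_) (by positivity)
  refine Real.rpow_le_rpow (norm_nonneg _) ?_ hα.le
  calc ‖(inner ℂ (S i) u : ℂ)‖ ≤ ‖S i‖ * ‖u‖ := norm_inner_le_norm _ _
    _ = ‖S i‖ := by rw [hu, mul_one]

lemma bracket_nonneg {m : Type*} [Fintype m] (S : m → TensorSpace ι') (α : ℝ) :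
    0 ≤ bracket S α := by
  apply Real.sSup_nonneg
  rintro c ⟨u, -, -, rfl⟩
  exact Real.rpow_nonneg (Finset.sum_nonneg fun i _ => Real.rpow_nonneg (norm_nonneg _) _) _

end Aux

/-- **Lemma 3.1 (Hölder inequality for horizontal tensor products).** If `1/α + 1/β = 1/γ`
then `[S ⊗ T]_γ ≤ [S]_α [T]_β`. -/
theorem bracket_horizontal_holder {d e r : ℕ} {ι : Fin d → Type*} {κ : Fin e → Type*}
    [∀ i, Fintype (ι i)] [∀ j, Fintype (κ j)]
    (S : Fin r → TensorSpace ι) (T : Fin r → TensorSpace κ)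
    (α β γ : ℝ) (hα : 0 < α) (hβ : 0 < β) (hγ : 0 < γ)
    (h : 1 / α + 1 / β = 1 / γ) :
    bracketH (fun i => hprod (S i) (T i)) γ ≤ bracket S α * bracket T β := by
  rw [bracketH]
  apply Real.sSup_le
  · rintro c ⟨u, ⟨x, y, hxp, hyp, hu⟩, hnorm, rfl⟩
    have hu' : u = hprod x y := PiLp.ext fun p => hu p
    subst hu'
    rw [norm_hprod] at hnorm
    have hx0 : ‖x‖ ≠ 0 := fun h0 => by simp [h0] at hnorm
    have hy0 : ‖y‖ ≠ 0 := fun h0 => by simp [h0] at hnorm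
    set x' : TensorSpace ι := ((‖x‖ : ℂ))⁻¹ • x with hx'def
    set y' : TensorSpace κ := ((‖y‖ : ℂ))⁻¹ • y with hy'def
    have hx'p : IsPure x' := IsPure.smul_norm_inv x hxp
    have hy'p : IsPure y' := IsPure.smul_norm_inv y hyp
    have hx'n : ‖x'‖ = 1 := by
      rw [hx'def, norm_smul, norm_inv, Complex.norm_real, norm_norm, inv_mul_cancel₀ hx0]
    have hy'n : ‖y'‖ = 1 := by
      rw [hy'def, norm_smul, norm_inv, Complex.norm_real, norm_norm, inv_mul_cancel₀ hy0]
    set A : Fin r → ℝ := fun i => ‖(inner ℂ (S i) x' : ℂ)‖ with hA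
    set B : Fin r → ℝ := fun i => ‖(inner ℂ (T i) y' : ℂ)‖ with hB
    have hAnn : ∀ i, 0 ≤ A i := fun i => norm_nonneg _
    have hBnn : ∀ i, 0 ≤ B i := fun i => norm_nonneg _
    have key : ∀ i, ‖(inner ℂ (hprod (S i) (T i)) (hprod x y) : ℂ)‖ = A i * B i := by
      intro i
      rw [inner_hprod, norm_mul]
      have hAi : A i = ‖x‖⁻¹ * ‖(inner ℂ (S i) x : ℂ)‖ := by
        rw [hA]
        simp [hx'def, inner_smul_right, norm_mul, norm_inv, Complex.norm_real, norm_norm]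
      have hBi : B i = ‖y‖⁻¹ * ‖(inner ℂ (T i) y : ℂ)‖ := by
        rw [hB]
        simp [hy'def, inner_smul_right, norm_mul, norm_inv, Complex.norm_real, norm_norm]
      have h1 : ‖x‖⁻¹ * ‖y‖⁻¹ = 1 := by rw [← mul_inv, hnorm, inv_one]
      rw [hAi, hBi]
      calc ‖(inner ℂ (S i) x : ℂ)‖ * ‖(inner ℂ (T i) y : ℂ)‖
          = (‖x‖⁻¹ * ‖y‖⁻¹) * (‖(inner ℂ (S i) x : ℂ)‖ * ‖(inner ℂ (T i) y : ℂ)‖) := by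
            rw [h1, one_mul]
        _ = ‖x‖⁻¹ * ‖(inner ℂ (S i) x : ℂ)‖ * (‖y‖⁻¹ * ‖(inner ℂ (T i) y : ℂ)‖) := by ring
    have hγα : γ < α := by
      have h1 : 1 / α < 1 / γ := by
        have : 0 < 1 / β := by positivity
        linarith
      rw [div_lt_div_iff₀ hα hγ] at h1
      linarith
    have hconj : Real.HolderConjugate (α / γ) (β / γ) := by
      rw [Real.holderConjugate_iff]
      constructor
      · rw [lt_div_iff₀ hγ, one_mul]; exact hγα
      · rw [inv_div, inv_div]
        have hcalc : γ / α + γ / β = γ * (1 / α + 1 / β) := by ring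
        rw [hcalc, h, mul_one_div, div_self hγ.ne']
    have holder : ∑ i, (A i * B i) ^ γ ≤
        (∑ i, A i ^ α) ^ (γ / α) * (∑ i, B i ^ β) ^ (γ / β) := by
      have H := Real.inner_le_Lp_mul_Lq_of_nonneg (s := Finset.univ)
        (f := fun i => A i ^ γ) (g := fun i => B i ^ γ) hconj
        (fun i _ => Real.rpow_nonneg (hAnn i) _) (fun i _ => Real.rpow_nonneg (hBnn i) _)
      have e1 : ∀ i : Fin r, (A i ^ γ) ^ (α / γ) = A i ^ α := by
        intro i
        rw [← Real.rpow_mul (hAnn i), mul_div_cancel₀ _ hγ.ne']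
      have e2 : ∀ i : Fin r, (B i ^ γ) ^ (β / γ) = B i ^ β := by
        intro i
        rw [← Real.rpow_mul (hBnn i), mul_div_cancel₀ _ hγ.ne']
      have e3 : ∀ i : Fin r, (A i * B i) ^ γ = A i ^ γ * B i ^ γ := fun i =>
        Real.mul_rpow (hAnn i) (hBnn i)
      rw [Finset.sum_congr rfl fun i _ => e3 i]
      rw [Finset.sum_congr rfl fun i _ => e1 i, Finset.sum_congr rfl fun i _ => e2 i,
        one_div_div, one_div_div] at H
      exact H
    have sumA_nn : 0 ≤ ∑ i, A i ^ α :=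
      Finset.sum_nonneg fun i _ => Real.rpow_nonneg (hAnn i) _
    have sumB_nn : 0 ≤ ∑ i, B i ^ β :=
      Finset.sum_nonneg fun i _ => Real.rpow_nonneg (hBnn i) _
    have h1 : (∑ i, A i ^ α) ^ (1 / α) ≤ bracket S α := by
      rw [bracket]
      exact le_csSup (bracket_bddAbove S hα) ⟨x', hx'p, hx'n, by rw [hA]⟩
    have h2 : (∑ i, B i ^ β) ^ (1 / β) ≤ bracket T β := by
      rw [bracket]
      exact le_csSup (bracket_bddAbove T hβ) ⟨y', hy'p, hy'n, by rw [hB]⟩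
    calc (∑ i, ‖(inner ℂ (hprod (S i) (T i)) (hprod x y) : ℂ)‖ ^ γ) ^ (1 / γ)
        = (∑ i, (A i * B i) ^ γ) ^ (1 / γ) := by
          rw [Finset.sum_congr rfl fun i _ => by rw [key i]]
      _ ≤ ((∑ i, A i ^ α) ^ (γ / α) * (∑ i, B i ^ β) ^ (γ / β)) ^ (1 / γ) :=
          Real.rpow_le_rpow (Finset.sum_nonneg fun i _ =>
            Real.rpow_nonneg (mul_nonneg (hAnn i) (hBnn i)) _) holder (by positivity)
      _ = (∑ i, A i ^ α) ^ (1 / α) * (∑ i, B i ^ β) ^ (1 / β) := by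
          rw [Real.mul_rpow (Real.rpow_nonneg sumA_nn _) (Real.rpow_nonneg sumB_nn _),
            ← Real.rpow_mul sumA_nn, ← Real.rpow_mul sumB_nn]
          congr 1
          · congr 1; field_simp
          · congr 1; field_simp
      _ ≤ bracket S α * bracket T β :=
          mul_le_mul h1 h2 (Real.rpow_nonneg sumB_nn _) (bracket_nonneg S α)
  · exact mul_nonneg (bracket_nonneg S α) (bracket_nonneg T β)
end
end

section
/- Let V = V^(1) ⊗ ⋯ ⊗ V^(d) be a tensor product of finite-dimensional complex Hilbert spaces, let v = (v_1,…,v_r) be an r-tuple of pure tensors of unit norm, and let α ≥ 1. Then [v]_{2α}^{2α} ≤ μ_α(v)^α + 1. -/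
noncomputable section

open Finset

variable {d : ℕ} {ι : Fin d → Type*} [∀ e, Fintype (ι e)]

private lemma rpow_comb {x : ℝ} (hx : 0 ≤ x) {y z w : ℝ} (h : w ≠ 0) (hw : y + z = w) :
    x ^ y * x ^ z = x ^ w := by
  subst hw; exact (Real.rpow_add' hx h).symm

/-- The key analytic inequality: for unit vectors `v i` in a complex inner product space,
a unit vector `u`, and `α ≥ 1`, if all the `α`-coherence sums are at most `K` then
`∑ i, |⟨v i, u⟩|^(2α) ≤ K + 1`. -/
private lemma key_ineq {n : ℕ} {E : Type*} [NormedAddCommGroup E] [InnerProductSpace ℂ E]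
    {α : ℝ} (hα : 1 ≤ α) (v : Fin n → E) (hunit : ∀ i, ‖v i‖ = 1)
    (u : E) (hu : ‖u‖ = 1) (K : ℝ) (hK : 0 ≤ K)
    (hKb : ∀ i, ∑ j ∈ univ.erase i, ‖(inner ℂ (v i) (v j) : ℂ)‖ ^ α ≤ K) :
    ∑ i, ‖(inner ℂ (v i) u : ℂ)‖ ^ (2 * α) ≤ K + 1 := by
  have hα0 : (0:ℝ) < α := lt_of_lt_of_le one_pos hα
  obtain ⟨c, hc⟩ : ∃ c : Fin n → ℝ, c = fun i => ‖(inner ℂ (v i) u : ℂ)‖ := ⟨_, rfl⟩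
  obtain ⟨g, hg⟩ : ∃ g : Fin n → Fin n → ℝ,
      g = fun i j => ‖(inner ℂ (v i) (v j) : ℂ)‖ := ⟨_, rfl⟩
  have hcval : ∀ i, ‖(inner ℂ (v i) u : ℂ)‖ = c i := fun i => by rw [hc]
  have hgval : ∀ i j, ‖(inner ℂ (v i) (v j) : ℂ)‖ = g i j := fun i j => by rw [hg]
  have hc0 : ∀ i, 0 ≤ c i := fun i => by rw [← hcval]; exact norm_nonneg _
  have hg0 : ∀ i j, 0 ≤ g i j := fun i j => by rw [← hgval]; exact norm_nonneg _
  have hgsymm : ∀ i j, g i j = g j i := fun i j => by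
    rw [← hgval, ← hgval]; exact norm_inner_symm (v i) (v j)
  have hgdiag : ∀ i, g i i = 1 := fun i => by
    rw [← hgval, inner_self_eq_norm_sq_to_K, norm_pow, RCLike.norm_ofReal, abs_norm,
      hunit i, one_pow]
  have hKb' : ∀ i, ∑ j ∈ univ.erase i, g i j ^ α ≤ K := by
    intro i
    refine le_trans (le_of_eq ?_) (hKb i)
    exact Finset.sum_congr rfl fun j _ => by rw [hgval]
  set S : ℝ := ∑ i, c i ^ (2 * α) with hSdef
  have hS0 : 0 ≤ S := Finset.sum_nonneg fun i _ => Real.rpow_nonneg (hc0 i) _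
  have hgoal : (∑ i, ‖(inner ℂ (v i) u : ℂ)‖ ^ (2 * α)) = S := by
    rw [hSdef]; exact Finset.sum_congr rfl fun i _ => by rw [hcval]
  rw [hgoal]
  -- Step 1 : S * S ≤ Q
  set t : Fin n → ℂ := fun i => ((c i ^ (2*α - 2) : ℝ) : ℂ) * (inner ℂ (v i) u : ℂ) with htdef
  set w : E := ∑ i, t i • v i with hwdef
  have hnormt : ∀ i, ‖t i‖ = c i ^ (2*α - 1) := by
    intro i
    show ‖((c i ^ (2*α - 2) : ℝ) : ℂ) * (inner ℂ (v i) u : ℂ)‖ = c i ^ (2*α-1)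
    rw [norm_mul, Complex.norm_real, Real.norm_eq_abs,
      abs_of_nonneg (Real.rpow_nonneg (hc0 i) _), hcval i]
    calc c i ^ (2*α-2) * c i = c i ^ (2*α-2) * c i ^ (1:ℝ) := by rw [Real.rpow_one]
      _ = c i ^ (2*α-1) := rpow_comb (hc0 i) (by linarith) (by ring)
  have hinnerwu : (inner ℂ w u : ℂ) = (S : ℂ) := by
    rw [hwdef, sum_inner, hSdef, Complex.ofReal_sum]
    refine Finset.sum_congr rfl fun i _ => ?_
    rw [inner_smul_left]
    show (starRingEnd ℂ) (((c i ^ (2*α - 2) : ℝ) : ℂ) * (inner ℂ (v i) u : ℂ))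
        * (inner ℂ (v i) u : ℂ) = ((c i ^ (2*α) : ℝ) : ℂ)
    have conj_mul' : (starRingEnd ℂ) (inner ℂ (v i) u : ℂ) * (inner ℂ (v i) u : ℂ)
        = ((‖(inner ℂ (v i) u : ℂ)‖ ^ 2 : ℝ) : ℂ) := by
      rw [mul_comm, Complex.mul_conj, Complex.normSq_eq_norm_sq]
    rw [map_mul, Complex.conj_ofReal, mul_assoc, conj_mul', hcval i, ← Complex.ofReal_mul]
    congr 1
    rw [← Real.rpow_natCast (c i) 2]
    exact rpow_comb (hc0 i) (by positivity) (by push_cast; ring)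
  have hSlew : S ≤ ‖w‖ := by
    calc S = ‖((S:ℝ) : ℂ)‖ := by
          rw [Complex.norm_real, Real.norm_eq_abs, abs_of_nonneg hS0]
      _ = ‖(inner ℂ w u : ℂ)‖ := by rw [hinnerwu]
      _ ≤ ‖w‖ * ‖u‖ := norm_inner_le_norm _ _
      _ = ‖w‖ := by rw [hu, mul_one]
  set Q : ℝ := ∑ i, ∑ j, c i ^ (2*α-1) * (c j ^ (2*α-1) * g i j) with hQdef
  have hwwQ : ‖w‖ * ‖w‖ ≤ Q := by
    have h1 : (inner ℂ w w : ℂ)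
        = ∑ i, ∑ j, (starRingEnd ℂ) (t i) * (t j * (inner ℂ (v i) (v j) : ℂ)) := by
      rw [hwdef, sum_inner]
      refine Finset.sum_congr rfl fun i _ => ?_
      rw [inner_smul_left, inner_sum, Finset.mul_sum]
      refine Finset.sum_congr rfl fun j _ => ?_
      rw [inner_smul_right]
    have h2 : ‖w‖ * ‖w‖ = RCLike.re (inner ℂ w w : ℂ) := (inner_self_eq_norm_mul_norm w).symm
    rw [h2, h1]
    have h3 : RCLike.re (∑ i, ∑ j, (starRingEnd ℂ) (t i) * (t j * (inner ℂ (v i) (v j) : ℂ)))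
        = ∑ i, ∑ j, ((starRingEnd ℂ) (t i) * (t j * (inner ℂ (v i) (v j) : ℂ))).re := by
      simp [Complex.re_sum]
    rw [h3, hQdef]
    refine Finset.sum_le_sum fun i _ => Finset.sum_le_sum fun j _ => ?_
    calc ((starRingEnd ℂ) (t i) * (t j * (inner ℂ (v i) (v j) : ℂ))).re
        ≤ ‖(starRingEnd ℂ) (t i) * (t j * (inner ℂ (v i) (v j) : ℂ))‖ :=
          Complex.re_le_norm _
      _ = c i ^ (2*α-1) * (c j ^ (2*α-1) * g i j) := by
          rw [norm_mul, norm_mul, RCLike.norm_conj, hnormt i, hnormt j, hgval i j]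
  have hSSQ : S * S ≤ Q :=
    le_trans (mul_le_mul hSlew hSlew hS0 (norm_nonneg w)) hwwQ
  -- Step 2 : Hölder
  set A : ℝ := ∑ i, ∑ j, (g i j * (c i * c j)) ^ α with hAdef
  have hA0 : 0 ≤ A := Finset.sum_nonneg fun i _ => Finset.sum_nonneg fun j _ =>
    Real.rpow_nonneg (mul_nonneg (hg0 i j) (mul_nonneg (hc0 i) (hc0 j))) _
  have hQA : Q ≤ A ^ (1/α) * (S * S) ^ ((α-1)/α) := by
    rcases eq_or_lt_of_le hα with heq | hlt
    · -- α = 1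
      have hA1 : (α - 1)/α = 0 := by rw [← heq]; norm_num
      have hQeqA : Q = A := by
        rw [hQdef, hAdef]
        refine Finset.sum_congr rfl fun i _ => Finset.sum_congr rfl fun j _ => ?_
        rw [← heq]
        norm_num [Real.rpow_one]
        ring
      rw [hQeqA, hA1, Real.rpow_zero, mul_one, ← heq]
      norm_num
    · -- α > 1
      have hα1 : α - 1 ≠ 0 := by linarith
      have hpq : Real.HolderConjugate α (α/(α-1)) := Real.HolderConjugate.conjExponent hlt
      have hq1 : 1/(α/(α-1)) = (α-1)/α := one_div_div _ _
      have holder := Real.inner_le_Lp_mul_Lq (univ : Finset (Fin n × Fin n))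
        (fun p => g p.1 p.2 * (c p.1 * c p.2))
        (fun p => (c p.1 * c p.2) ^ (2*α - 2)) hpq
      have hfnn : ∀ p : Fin n × Fin n, (0:ℝ) ≤ g p.1 p.2 * (c p.1 * c p.2) := fun p =>
        mul_nonneg (hg0 _ _) (mul_nonneg (hc0 _) (hc0 _))
      have hhnn : ∀ p : Fin n × Fin n, (0:ℝ) ≤ (c p.1 * c p.2) ^ (2*α-2) := fun p =>
        Real.rpow_nonneg (mul_nonneg (hc0 _) (hc0 _)) _
      have hleft : ∑ p : Fin n × Fin n,
          (g p.1 p.2 * (c p.1 * c p.2)) * ((c p.1 * c p.2) ^ (2*α-2)) = Q := by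
        rw [hQdef, Fintype.sum_prod_type]
        refine Finset.sum_congr rfl fun i _ => Finset.sum_congr rfl fun j _ => ?_
        have e1 : (c i * c j) * (c i * c j) ^ (2*α-2) = (c i * c j) ^ (2*α-1) := by
          nth_rewrite 1 [← Real.rpow_one (c i * c j)]
          exact rpow_comb (mul_nonneg (hc0 i) (hc0 j)) (by linarith) (by ring)
        calc g i j * (c i * c j) * ((c i * c j) ^ (2*α-2))
            = g i j * ((c i * c j) * (c i * c j) ^ (2*α-2)) := by ring
          _ = g i j * (c i * c j) ^ (2*α-1) := by rw [e1]
          _ = c i ^ (2*α-1) * (c j ^ (2*α-1) * g i j) := by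
              rw [Real.mul_rpow (hc0 i) (hc0 j)]; ring
      have hright1 : ∑ p : Fin n × Fin n, |g p.1 p.2 * (c p.1 * c p.2)| ^ α = A := by
        rw [hAdef, Fintype.sum_prod_type]
        refine Finset.sum_congr rfl fun i _ => Finset.sum_congr rfl fun j _ => ?_
        rw [abs_of_nonneg (hfnn (i, j))]
      have hright2 : ∑ p : Fin n × Fin n,
          |(c p.1 * c p.2) ^ (2*α-2)| ^ (α/(α-1)) = S * S := by
        rw [Fintype.sum_prod_type, hSdef, Finset.sum_mul_sum]
        refine Finset.sum_congr rfl fun i _ => Finset.sum_congr rfl fun j _ => ?_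
        rw [abs_of_nonneg (hhnn (i, j))]
        have e2 : ((c i * c j) ^ (2*α-2)) ^ (α/(α-1)) = (c i * c j) ^ ((2*α-2) * (α/(α-1))) :=
          (Real.rpow_mul (mul_nonneg (hc0 i) (hc0 j)) _ _).symm
        rw [e2, show (2*α-2) * (α/(α-1)) = 2*α by field_simp,
          Real.mul_rpow (hc0 i) (hc0 j)]
      calc Q = ∑ p : Fin n × Fin n,
            (g p.1 p.2 * (c p.1 * c p.2)) * ((c p.1 * c p.2) ^ (2*α-2)) := hleft.symm
        _ ≤ (∑ p : Fin n × Fin n, |g p.1 p.2 * (c p.1 * c p.2)| ^ α) ^ (1/α)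
            * (∑ p : Fin n × Fin n, |(c p.1 * c p.2) ^ (2*α-2)| ^ (α/(α-1))) ^ (1/(α/(α-1))) :=
            holder
        _ = A ^ (1/α) * (S * S) ^ ((α-1)/α) := by rw [hright1, hright2, hq1]
  -- Step 3 : A ≤ S * (1 + K)
  have hAS : A ≤ S * (1 + K) := by
    have hterm : ∀ i j, (g i j * (c i * c j)) ^ α
        ≤ g i j ^ α * ((c i ^ (2*α) + c j ^ (2*α)) / 2) := by
      intro i j
      have e3 : (g i j * (c i * c j)) ^ α = g i j ^ α * (c i ^ α * c j ^ α) := by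
        rw [Real.mul_rpow (hg0 i j) (mul_nonneg (hc0 i) (hc0 j)),
          Real.mul_rpow (hc0 i) (hc0 j)]
      rw [e3]
      refine mul_le_mul_of_nonneg_left ?_ (Real.rpow_nonneg (hg0 i j) _)
      have hsq : ∀ k, c k ^ α * c k ^ α = c k ^ (2*α) := fun k =>
        rpow_comb (hc0 k) (by positivity) (by ring)
      nlinarith [sq_nonneg (c i ^ α - c j ^ α), hsq i, hsq j,
        Real.rpow_nonneg (hc0 i) α, Real.rpow_nonneg (hc0 j) α]
    have hAle : A ≤ ∑ i, ∑ j, g i j ^ α * ((c i ^ (2*α) + c j ^ (2*α)) / 2) := by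
      rw [hAdef]
      exact Finset.sum_le_sum fun i _ => Finset.sum_le_sum fun j _ => hterm i j
    have hswap : ∑ i, ∑ j, g i j ^ α * c j ^ (2*α) = ∑ i, ∑ j, g i j ^ α * c i ^ (2*α) := by
      rw [Finset.sum_comm]
      exact Finset.sum_congr rfl fun i _ => Finset.sum_congr rfl fun j _ => by
        rw [hgsymm j i]
    have hsplit : ∑ i, ∑ j, g i j ^ α * ((c i ^ (2*α) + c j ^ (2*α)) / 2)
        = ∑ i, ∑ j, g i j ^ α * c i ^ (2*α) := by
      have e1 : ∀ i, ∑ j, g i j ^ α * ((c i ^ (2*α) + c j ^ (2*α)) / 2)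
          = ((∑ j, g i j ^ α * c i ^ (2*α)) + ∑ j, g i j ^ α * c j ^ (2*α)) / 2 := by
        intro i
        rw [← Finset.sum_add_distrib, Finset.sum_div]
        exact Finset.sum_congr rfl fun j _ => by ring
      calc ∑ i, ∑ j, g i j ^ α * ((c i ^ (2*α) + c j ^ (2*α)) / 2)
          = ∑ i, (((∑ j, g i j ^ α * c i ^ (2*α)) + ∑ j, g i j ^ α * c j ^ (2*α)) / 2) :=
            Finset.sum_congr rfl fun i _ => e1 i
        _ = ((∑ i, ∑ j, g i j ^ α * c i ^ (2*α)) + ∑ i, ∑ j, g i j ^ α * c j ^ (2*α)) / 2 := by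
            rw [← Finset.sum_add_distrib, Finset.sum_div]
        _ = ∑ i, ∑ j, g i j ^ α * c i ^ (2*α) := by rw [hswap]; ring
    have hrow : ∀ i, ∑ j, g i j ^ α * c i ^ (2*α) ≤ c i ^ (2*α) * (1 + K) := by
      intro i
      have e4 : ∑ j, g i j ^ α * c i ^ (2*α) = (∑ j, g i j ^ α) * c i ^ (2*α) := by
        rw [Finset.sum_mul]
      rw [e4]
      have e5 : ∑ j, g i j ^ α = g i i ^ α + ∑ j ∈ univ.erase i, g i j ^ α :=
        (Finset.add_sum_erase univ _ (mem_univ i)).symm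
      have e6 : (∑ j, g i j ^ α) ≤ 1 + K := by
        rw [e5, hgdiag i, Real.one_rpow]
        exact add_le_add_right (hKb' i) 1
      calc (∑ j, g i j ^ α) * c i ^ (2*α) ≤ (1 + K) * c i ^ (2*α) :=
            mul_le_mul_of_nonneg_right e6 (Real.rpow_nonneg (hc0 i) _)
        _ = c i ^ (2*α) * (1 + K) := by ring
    calc A ≤ ∑ i, ∑ j, g i j ^ α * ((c i ^ (2*α) + c j ^ (2*α)) / 2) := hAle
      _ = ∑ i, ∑ j, g i j ^ α * c i ^ (2*α) := hsplit
      _ ≤ ∑ i, c i ^ (2*α) * (1 + K) := Finset.sum_le_sum fun i _ => hrow i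
      _ = S * (1 + K) := by rw [hSdef, Finset.sum_mul]
  -- Step 4 : conclude
  rcases eq_or_lt_of_le hS0 with hS | hSpos
  · linarith [hS.symm]
  have hKpos : (0:ℝ) < 1 + K := by linarith
  have h5 : S * S ≤ (S * (1 + K)) ^ (1/α) * (S * S) ^ ((α-1)/α) := by
    refine hSSQ.trans (hQA.trans ?_)
    refine mul_le_mul_of_nonneg_right ?_ (Real.rpow_nonneg (mul_nonneg hS0 hS0) _)
    exact Real.rpow_le_rpow hA0 hAS (by positivity)
  have hfin : S ^ ((1:ℝ)/α) ≤ (1 + K) ^ ((1:ℝ)/α) := by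
    have hX : (0:ℝ) < S ^ ((1:ℝ)/α + 2*((α-1)/α)) := Real.rpow_pos_of_pos hSpos _
    refine le_of_mul_le_mul_right ?_ hX
    have eL : S ^ ((1:ℝ)/α) * S ^ ((1:ℝ)/α + 2*((α-1)/α)) = S * S := by
      have h2 : (1:ℝ)/α + ((1:ℝ)/α + 2*((α-1)/α)) = 2 := by field_simp; ring
      rw [rpow_comb hS0 (by norm_num : (2:ℝ) ≠ 0) h2,
        show (2:ℝ) = ((2:ℕ):ℝ) by norm_num, Real.rpow_natCast]
      ring
    have eR : (1 + K) ^ ((1:ℝ)/α) * S ^ ((1:ℝ)/α + 2*((α-1)/α))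
        = (S * (1 + K)) ^ (1/α) * (S * S) ^ ((α-1)/α) := by
      rw [Real.mul_rpow hS0 (le_of_lt hKpos)]
      have eSS : (S * S) ^ ((α-1)/α) = S ^ (2*((α-1)/α)) := by
        rw [show S * S = S ^ (2:ℕ) by ring, ← Real.rpow_natCast S 2,
          ← Real.rpow_mul hS0]
        norm_num
      rw [eSS, Real.rpow_add hSpos]
      ring
    rw [eL, eR]
    exact h5
  have h7 : S ≤ 1 + K := by
    have h8 := Real.rpow_le_rpow (Real.rpow_nonneg hS0 _) hfin (le_of_lt hα0)
    rwa [← Real.rpow_mul hS0, ← Real.rpow_mul (le_of_lt hKpos), one_div,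
      inv_mul_cancel₀ (ne_of_gt hα0), Real.rpow_one, Real.rpow_one] at h8
  linarith

/-- **Proposition 3.5.** For an `r`-tuple `v = (v₁, …, v_r)` of pure tensors of unit length
and `α ≥ 1` we have `[v]_{2α}^{2α} ≤ μ_α(v)^α + 1`. -/
theorem bracket_pow_le_mu_pow_add_one {d r : ℕ} {ι : Fin d → Type*} [∀ e, Fintype (ι e)]
    (α : ℝ) (hα : 1 ≤ α)
    (v : Fin r → TensorSpace ι) (hpure : ∀ i, IsPure (v i)) (hunit : ∀ i, ‖v i‖ = 1) :
    bracket v (2 * α) ^ (2 * α) ≤ mu v α ^ α + 1 := by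
  have hα0 : (0:ℝ) < α := lt_of_lt_of_le one_pos hα
  have h2α : (0:ℝ) < 2 * α := by linarith
  have hmu0 : 0 ≤ mu v α := by
    apply Real.sSup_nonneg
    rintro x ⟨i, rfl⟩
    exact Real.rpow_nonneg
      (Finset.sum_nonneg fun j _ => Real.rpow_nonneg (norm_nonneg _) _) _
  set K : ℝ := mu v α ^ α with hKdef
  have hK0 : 0 ≤ K := Real.rpow_nonneg hmu0 _
  have hKb : ∀ i, ∑ j ∈ univ.erase i, ‖(inner ℂ (v i) (v j) : ℂ)‖ ^ α ≤ K := by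
    intro i
    have hnn : 0 ≤ ∑ j ∈ univ.erase i, ‖(inner ℂ (v i) (v j) : ℂ)‖ ^ α :=
      Finset.sum_nonneg fun j _ => Real.rpow_nonneg (norm_nonneg _) _
    have hbdd : BddAbove {c : ℝ | ∃ i, c =
        (∑ j ∈ univ.erase i, ‖(inner ℂ (v i) (v j) : ℂ)‖ ^ α) ^ (1 / α)} := by
      have : {c : ℝ | ∃ i, c =
          (∑ j ∈ univ.erase i, ‖(inner ℂ (v i) (v j) : ℂ)‖ ^ α) ^ (1 / α)}
          = Set.range (fun i : Fin r =>
            (∑ j ∈ univ.erase i, ‖(inner ℂ (v i) (v j) : ℂ)‖ ^ α) ^ (1 / α)) := by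
        ext x; constructor
        · rintro ⟨i, rfl⟩; exact ⟨i, rfl⟩
        · rintro ⟨i, rfl⟩; exact ⟨i, rfl⟩
      rw [this]
      exact (Set.finite_range _).bddAbove
    have hle : (∑ j ∈ univ.erase i, ‖(inner ℂ (v i) (v j) : ℂ)‖ ^ α) ^ (1 / α) ≤ mu v α :=
      le_csSup hbdd ⟨i, rfl⟩
    have heq : ((∑ j ∈ univ.erase i, ‖(inner ℂ (v i) (v j) : ℂ)‖ ^ α) ^ (1 / α)) ^ α
        = ∑ j ∈ univ.erase i, ‖(inner ℂ (v i) (v j) : ℂ)‖ ^ α := by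
      rw [← Real.rpow_mul hnn, one_div, inv_mul_cancel₀ (ne_of_gt hα0), Real.rpow_one]
    calc ∑ j ∈ univ.erase i, ‖(inner ℂ (v i) (v j) : ℂ)‖ ^ α
        = ((∑ j ∈ univ.erase i, ‖(inner ℂ (v i) (v j) : ℂ)‖ ^ α) ^ (1 / α)) ^ α := heq.symm
      _ ≤ mu v α ^ α := Real.rpow_le_rpow (Real.rpow_nonneg hnn _) hle (le_of_lt hα0)
  have hbr : bracket v (2 * α) ≤ (K + 1) ^ (1 / (2 * α)) := by
    apply Real.sSup_le
    · rintro x ⟨u, hupure, hunorm, rfl⟩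
      have hS := key_ineq hα v hunit u hunorm K hK0 hKb
      exact Real.rpow_le_rpow
        (Finset.sum_nonneg fun i _ => Real.rpow_nonneg (norm_nonneg _) _) hS
        (by positivity)
    · positivity
  have hbr0 : 0 ≤ bracket v (2 * α) := by
    apply Real.sSup_nonneg
    rintro x ⟨u, hupure, hunorm, rfl⟩
    exact Real.rpow_nonneg
      (Finset.sum_nonneg fun i _ => Real.rpow_nonneg (norm_nonneg _) _) _
  calc bracket v (2 * α) ^ (2 * α) ≤ ((K + 1) ^ (1 / (2 * α))) ^ (2 * α) :=
      Real.rpow_le_rpow hbr0 hbr (le_of_lt h2α)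
    _ = K + 1 := by
      rw [← Real.rpow_mul (by positivity), one_div, inv_mul_cancel₀ (ne_of_gt h2α),
        Real.rpow_one]
end
end
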